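/- arXiv:0910.4889 — 3 statements merged into one kernel-verified Lean document; each statement's English description precedes it below -/
import Mathlib

section
/- Let G be a 2-connected finite simple graph with path-width at most 2 and let C be a longest cycle of G. Then no two bridges of C cross. -/
open SimpleGraph

universe u v

/-- A path-decomposition of a simple graph: a finite sequence of bags covering all vertices
and edges, such that bags containing a fixed vertex occur consecutively. -/
structure PathDecomp {V : Type u} (G : SimpleGraph V) where
  n : ℕ
  bag : Fin n → Finset V
  mem_bag : ∀ v : V, ∃ i, v ∈ bag i
  edge_bag : ∀ ⦃u w : V⦄, G.Adj u w → ∃ i, u ∈ bag i ∧ w ∈ bag i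
  interp : ∀ i j k : Fin n, i ≤ j → j ≤ k → ∀ v : V, v ∈ bag i → v ∈ bag k → v ∈ bag j

/-- The width of a path-decomposition: (maximal bag size) - 1. -/
def PathDecomp.width {V : Type u} {G : SimpleGraph V} (D : PathDecomp G) : ℕ :=
  (Finset.univ.sup fun i => (D.bag i).card) - 1

/-- The path-width of a graph: the minimum width of a path-decomposition. -/
noncomputable def pathWidth {V : Type u} (G : SimpleGraph V) : ℕ :=
  sInf {w | ∃ D : PathDecomp G, D.width = w}

/-- `IsMinor G H` : `H` is a minor of `G`, witnessed by a family of pairwise disjoint nonempty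
connected branch sets in `G` indexed by the vertices of `H`. -/
def IsMinor {V : Type u} {W : Type v} (G : SimpleGraph V) (H : SimpleGraph W) : Prop :=
  ∃ B : W → Set V,
    (∀ w, (B w).Nonempty) ∧
    (Pairwise fun w w' => Disjoint (B w) (B w')) ∧
    (∀ w, (G.induce (B w)).Connected) ∧
    (∀ ⦃w w'⦄, H.Adj w w' → ∃ u ∈ B w, ∃ u' ∈ B w', G.Adj u u')

/-- A graph is 2-connected if it has at least 3 vertices and deleting any vertex leaves it
connected. -/
def TwoConnected {V : Type u} (G : SimpleGraph V) : Prop :=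
  3 ≤ Nat.card V ∧ ∀ v : V, (G.induce ({v}ᶜ : Set V)).Connected

/-- A graph is 2-edge-connected if it is connected, has at least 2 vertices, and deleting any
edge leaves it connected. -/
def TwoEdgeConnected {V : Type u} (G : SimpleGraph V) : Prop :=
  G.Connected ∧ 2 ≤ Nat.card V ∧ ∀ e ∈ G.edgeSet, (G.deleteEdges {e}).Connected

/-- A track representation of a graph `G`: two disjoint paths `p 0, …, p (k-1)` and
`q 0, …, q (l-1)`, short chords (edges `p i — q j`) and long chords (paths `p i — m — q j`
with middle vertex `m ∈ M`, recorded by `ends m = (i, j)`), the chords pairwise non-crossing,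
with a chord joining the first vertices of the two paths and a chord joining the last ones;
the vertices of `G` are exactly those of the two paths plus the middle vertices, and the
edges of `G` are exactly the path edges and the chord edges. -/
structure TrackRep {V : Type u} (G : SimpleGraph V) where
  k : ℕ
  l : ℕ
  kpos : 0 < k
  lpos : 0 < l
  p : Fin k → V
  q : Fin l → V
  short : Set (Fin k × Fin l)
  M : Set V
  ends : V → Fin k × Fin l
  M_fin : M.Finite
  p_inj : Function.Injective p
  q_inj : Function.Injective q
  p_ne_q : ∀ i j, p i ≠ q j
  M_ne_p : ∀ ⦃m⦄, m ∈ M → ∀ i, m ≠ p i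
  M_ne_q : ∀ ⦃m⦄, m ∈ M → ∀ j, m ≠ q j
  vert_cover : ∀ x : V, (∃ i, x = p i) ∨ (∃ j, x = q j) ∨ x ∈ M
  noncross : ∀ c ∈ short ∪ ends '' M, ∀ c' ∈ short ∪ ends '' M,
      0 ≤ (((c.1 : ℕ) : ℤ) - ((c'.1 : ℕ) : ℤ)) * (((c.2 : ℕ) : ℤ) - ((c'.2 : ℕ) : ℤ))
  first_chord : (⟨0, kpos⟩, ⟨0, lpos⟩) ∈ short ∪ ends '' M
  last_chord : (⟨k - 1, Nat.sub_lt kpos Nat.one_pos⟩, ⟨l - 1, Nat.sub_lt lpos Nat.one_pos⟩)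
      ∈ short ∪ ends '' M
  adj_iff : ∀ u w : V, G.Adj u w ↔
      (∃ i j : Fin k, ((i : ℕ) + 1 = (j : ℕ) ∨ (j : ℕ) + 1 = (i : ℕ)) ∧ u = p i ∧ w = p j) ∨
      (∃ i j : Fin l, ((i : ℕ) + 1 = (j : ℕ) ∨ (j : ℕ) + 1 = (i : ℕ)) ∧ u = q i ∧ w = q j) ∨
      (∃ c ∈ short, (u = p c.1 ∧ w = q c.2) ∨ (u = q c.2 ∧ w = p c.1)) ∨
      (∃ m ∈ M, (u = m ∧ (w = p (ends m).1 ∨ w = q (ends m).2)) ∨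
                (w = m ∧ (u = p (ends m).1 ∨ u = q (ends m).2)))

/-- A graph is a track if it admits a track representation. -/
def IsTrack {V : Type u} (G : SimpleGraph V) : Prop := Nonempty (TrackRep G)

/-- A graph is a partial track if it is (isomorphic to) a subgraph of a track. -/
def IsPartialTrack {V : Type u} (G : SimpleGraph V) : Prop :=
  ∃ (W : Type) (T : SimpleGraph W) (f : V → W),
    IsTrack T ∧ Function.Injective f ∧ ∀ ⦃a b : V⦄, G.Adj a b → T.Adj (f a) (f b)

/-- `r` can play the role of a corner of `G`: some track representation of `G` has `r`
as one of the four corners `p₁, p_k, q₁, q_ℓ`. -/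
def CanBeCorner {V : Type u} (G : SimpleGraph V) (r : V) : Prop :=
  ∃ T : TrackRep G,
    r = T.p ⟨0, T.kpos⟩ ∨ r = T.p ⟨T.k - 1, Nat.sub_lt T.kpos Nat.one_pos⟩ ∨
    r = T.q ⟨0, T.lpos⟩ ∨ r = T.q ⟨T.l - 1, Nat.sub_lt T.lpos Nat.one_pos⟩

/-- `r` and `r'` can play the role of opposite corners of `G`. -/
def CanBeOppositeCorners {V : Type u} (G : SimpleGraph V) (r r' : V) : Prop :=
  ∃ T : TrackRep G,
    (r = T.p ⟨0, T.kpos⟩ ∨ r = T.q ⟨0, T.lpos⟩) ∧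
    (r' = T.p ⟨T.k - 1, Nat.sub_lt T.kpos Nat.one_pos⟩ ∨
     r' = T.q ⟨T.l - 1, Nat.sub_lt T.lpos Nat.one_pos⟩)

/-- `r` can play the role of a degenerate side of `G`: some track representation has `k = 1`
and `p₁ = r`. -/
def CanBeDegenerateSide {V : Type u} (G : SimpleGraph V) (r : V) : Prop :=
  ∃ T : TrackRep G, T.k = 1 ∧ r = T.p ⟨0, T.kpos⟩

/-- Two edges are equal or lie on a common cycle. -/
def OnCommonCycle {V : Type u} (G : SimpleGraph V) (e f : Sym2 V) : Prop :=
  e = f ∨ ∃ (x : V) (c : G.Walk x x), c.IsCycle ∧ e ∈ c.edges ∧ f ∈ c.edges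

/-- The subgraph of `G` spanned by a set `F` of edges. -/
def edgeSpan {V : Type u} (G : SimpleGraph V) (F : Set (Sym2 V)) : G.Subgraph where
  verts := {a | ∃ b, G.Adj a b ∧ s(a, b) ∈ F}
  Adj a b := G.Adj a b ∧ s(a, b) ∈ F
  adj_sub h := h.1
  edge_vert h := ⟨_, h.1, h.2⟩
  symm := ⟨fun a b h => ⟨h.1.symm, by rw [Sym2.eq_swap]; exact h.2⟩⟩

/-- `B` is a block of `G`: the subgraph spanned by an equivalence class of edges under the
relation "being equal or lying on a common cycle". -/
def IsBlock {V : Type u} (G : SimpleGraph V) (B : G.Subgraph) : Prop :=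
  ∃ e ∈ G.edgeSet, B = edgeSpan G {f | OnCommonCycle G e f}

/-- A cut vertex: a vertex whose removal disconnects the (connected) graph. -/
def IsCutVertex {V : Type u} (G : SimpleGraph V) (v : V) : Prop :=
  G.Connected ∧ ¬ (G.induce ({v}ᶜ : Set V)).Connected

/-- The subgraph `B` of `G` (as an abstract graph) is a track. -/
def SubIsTrack {V : Type u} {G : SimpleGraph V} (B : G.Subgraph) : Prop :=
  IsTrack B.coe

/-- The vertex `r` can play the role of a corner of the subgraph `B`. -/
def SubCanBeCorner {V : Type u} {G : SimpleGraph V} (B : G.Subgraph) (r : V) : Prop :=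
  ∃ h : r ∈ B.verts, CanBeCorner B.coe ⟨r, h⟩

/-- The vertices `r, r'` can play the role of opposite corners of the subgraph `B`. -/
def SubCanBeOppositeCorners {V : Type u} {G : SimpleGraph V} (B : G.Subgraph)
    (r r' : V) : Prop :=
  ∃ (h : r ∈ B.verts) (h' : r' ∈ B.verts), CanBeOppositeCorners B.coe ⟨r, h⟩ ⟨r', h'⟩

/-- The vertex `r` can play the role of a degenerate side of the subgraph `B`. -/
def SubCanBeDegenerateSide {V : Type u} {G : SimpleGraph V} (B : G.Subgraph) (r : V) : Prop :=
  ∃ h : r ∈ B.verts, CanBeDegenerateSide B.coe ⟨r, h⟩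

/-- `C` is a longest cycle of `G`. -/
def IsLongestCycle {V : Type u} (G : SimpleGraph V) {x : V} (C : G.Walk x x) : Prop :=
  C.IsCycle ∧ ∀ (y : V) (D : G.Walk y y), D.IsCycle → D.length ≤ C.length

/-- `N` is (the vertex set of) a connected component of `G − S`. -/
def IsCompOf {V : Type u} (G : SimpleGraph V) (S N : Set V) : Prop :=
  N.Nonempty ∧ N ⊆ Sᶜ ∧ (G.induce N).Connected ∧
    ∀ a ∈ N, ∀ b, b ∉ S → G.Adj a b → b ∈ N

/-- The subgraph consisting of all edges of `G` incident to a vertex of `N`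
(together with their endpoints). -/
def bridgeFromComp {V : Type u} (G : SimpleGraph V) (N : Set V) : G.Subgraph where
  verts := {a | ∃ b, G.Adj a b ∧ (a ∈ N ∨ b ∈ N)}
  Adj a b := G.Adj a b ∧ (a ∈ N ∨ b ∈ N)
  adj_sub h := h.1
  edge_vert h := ⟨_, h.1, h.2⟩
  symm := ⟨fun a b h => ⟨h.1.symm, h.2.symm⟩⟩

/-- `B` is a bridge of the cycle `C` in `G`: either the subgraph of all edges incident to a
component of `G − V(C)`, or a single edge of `G` joining two vertices of `C` and not lying
on `C`. -/
def IsBridgeOf {V : Type u} (G : SimpleGraph V) {x : V} (C : G.Walk x x)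
    (B : G.Subgraph) : Prop :=
  (∃ N : Set V, IsCompOf G {a | a ∈ C.support} N ∧ B = bridgeFromComp G N) ∨
  (∃ (a b : V) (h : G.Adj a b), a ∈ C.support ∧ b ∈ C.support ∧ s(a, b) ∉ C.edges ∧
      B = G.subgraphOfAdj h)

/-- The legs of a bridge `B` of a cycle `C`: the vertices of `B` lying on `C`. -/
def legs {V : Type u} {G : SimpleGraph V} {x : V} (C : G.Walk x x) (B : G.Subgraph) : Set V :=
  {a | a ∈ B.verts ∧ a ∈ C.support}

/-- `z` lies strictly between `a` and `b` in the linear order given by the list `L`. -/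
def posBetween {V : Type u} [DecidableEq V] (L : List V) (a b z : V) : Prop :=
  (L.idxOf a < L.idxOf z ∧ L.idxOf z < L.idxOf b) ∨
  (L.idxOf b < L.idxOf z ∧ L.idxOf z < L.idxOf a)

/-- The pairs `{a₁, a₂}` and `{b₁, b₂}` are crossing pairs on the cyclic order given by the
list `L`: the pairs are disjoint pairs of distinct vertices and the four vertices alternate
cyclically (equivalently, exactly one of `b₁, b₂` lies strictly between `a₁` and `a₂`). -/
def CrossingPairs {V : Type u} [DecidableEq V] (L : List V) (a₁ a₂ b₁ b₂ : V) : Prop :=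
  a₁ ≠ a₂ ∧ b₁ ≠ b₂ ∧ a₁ ≠ b₁ ∧ a₁ ≠ b₂ ∧ a₂ ≠ b₁ ∧ a₂ ≠ b₂ ∧
    Xor' (posBetween L a₁ a₂ b₁) (posBetween L a₁ a₂ b₂)

/-- Two bridges of a cycle `C` cross: some pair of legs of one and some pair of legs of the
other are crossing pairs along `C`. -/
def BridgesCross {V : Type u} [DecidableEq V] {G : SimpleGraph V} {x : V} (C : G.Walk x x)
    (B₁ B₂ : G.Subgraph) : Prop :=
  ∃ a₁ ∈ legs C B₁, ∃ a₂ ∈ legs C B₁, ∃ b₁ ∈ legs C B₂, ∃ b₂ ∈ legs C B₂,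
    CrossingPairs C.support.tail a₁ a₂ b₁ b₂


section BridgesProofHelpers
variable {V : Type u}

private lemma my_singleton_conn (G : SimpleGraph V) (v : V) :
    (G.induce {v}).Connected := by
  haveI : Nonempty ({v} : Set V) := ⟨⟨v, rfl⟩⟩
  refine ⟨fun a b => ?_⟩
  have hab : a = b := by
    have ha := a.2; have hb := b.2
    simp only [Set.mem_singleton_iff] at ha hb
    exact Subtype.ext (ha.trans hb.symm)
  rw [hab]

private lemma my_insert_conn (G : SimpleGraph V) {s : Set V} {a b : V}
    (hs : (G.induce s).Connected) (hb : b ∈ s) (hab : G.Adj a b) :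
    (G.induce (insert a s)).Connected := by
  have h := SimpleGraph.connected_induce_union (my_singleton_conn G a).preconnected hs.preconnected
    (Set.mem_singleton a) hb hab
  rwa [Set.singleton_union] at h

private lemma my_arc_conn (G : SimpleGraph V) (d : ℕ → V)
    (hadj : ∀ m, G.Adj (d m) (d (m + 1))) :
    ∀ (len lo : ℕ), (G.induce (d '' Set.Ico lo (lo + len + 1))).Connected := by
  intro len
  induction len with
  | zero =>
    intro lo
    have h1 : Set.Ico lo (lo + 0 + 1) = {lo} := by
      ext m; simp only [Set.mem_Ico, Set.mem_singleton_iff]; omega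
    rw [h1, Set.image_singleton]
    exact my_singleton_conn G (d lo)
  | succ k ih =>
    intro lo
    have h1 : Set.Ico lo (lo + (k + 1) + 1) = insert (lo + k + 1) (Set.Ico lo (lo + k + 1)) := by
      ext m; simp only [Set.mem_Ico, Set.mem_insert_iff]; omega
    rw [h1, Set.image_insert_eq]
    exact my_insert_conn G (ih lo)
      ⟨lo + k, by simp only [Set.mem_Ico]; omega, rfl⟩ ((hadj (lo + k)).symm)

private lemma my_arc_conn' (G : SimpleGraph V) (d : ℕ → V)
    (hadj : ∀ m, G.Adj (d m) (d (m + 1))) {lo hi : ℕ} (h : lo < hi) :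
    (G.induce (d '' Set.Ico lo hi)).Connected := by
  have he : hi = lo + (hi - lo - 1) + 1 := by omega
  rw [he]; exact my_arc_conn G d hadj _ lo

private lemma my_bag_big (G : SimpleGraph V) (D : PathDecomp G) (S : Fin 4 → Set V)
    (hconn : ∀ t, (G.induce (S t)).Connected)
    (hdisj : ∀ t t', t ≠ t' → Disjoint (S t) (S t'))
    (hadj : ∀ t t', t ≠ t' → ∃ u ∈ S t, ∃ u' ∈ S t', G.Adj u u') :
    ∃ i, 4 ≤ (D.bag i).card := by
  classical
  set J : Fin 4 → Finset (Fin D.n) :=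
    fun t => Finset.univ.filter (fun i => ∃ v ∈ S t, v ∈ D.bag i) with hJdef
  have memJ : ∀ t i, i ∈ J t ↔ ∃ v ∈ S t, v ∈ D.bag i := by
    intro t i; simp [hJdef]
  have pair : ∀ t t', t ≠ t' → ∃ i, i ∈ J t ∧ i ∈ J t' := by
    intro t t' h
    obtain ⟨u, hu, u', hu', huu⟩ := hadj t t' h
    obtain ⟨i, h1, h2⟩ := D.edge_bag huu
    exact ⟨i, (memJ t i).2 ⟨u, hu, h1⟩, (memJ t' i).2 ⟨u', hu', h2⟩⟩
  have Jne : ∀ t, (J t).Nonempty := by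
    intro t
    by_cases h : t = 0
    · obtain ⟨i, h1, -⟩ := pair t 1 (by rw [h]; decide)
      exact ⟨i, h1⟩
    · obtain ⟨i, h1, -⟩ := pair t 0 h
      exact ⟨i, h1⟩
  have INT : ∀ t (i j k : Fin D.n), i ≤ j → j ≤ k → i ∈ J t → k ∈ J t → j ∈ J t := by
    intro t i j k hij hjk hi hk
    by_contra hj
    have hjprop : ∀ v ∈ S t, v ∉ D.bag j := by
      intro v hv hvb
      exact hj ((memJ t j).2 ⟨v, hv, hvb⟩)
    obtain ⟨u, hu, hbi⟩ := (memJ t i).1 hi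
    obtain ⟨u', hu', hbk⟩ := (memJ t k).1 hk
    have step : ∀ (a b : (S t : Set V)), (G.induce (S t)).Adj a b →
        (∃ m, m < j ∧ (a : V) ∈ D.bag m) → (∃ m, m < j ∧ (b : V) ∈ D.bag m) := by
      rintro ⟨a, ha⟩ ⟨b, hb⟩ hab ⟨m, hm, ham⟩
      have hGab : G.Adj a b := hab
      obtain ⟨m', hma, hmb⟩ := D.edge_bag hGab
      have hm' : m' < j := by
        rcases lt_trichotomy m' j with h | h | h
        · exact h
        · exact absurd (h ▸ hma) (hjprop a ha)
        · exact absurd (D.interp m j m' hm.le h.le a ham hma) (hjprop a ha)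
      exact ⟨m', hm', hmb⟩
    have walkind : ∀ (a b : (S t : Set V)) (_ : (G.induce (S t)).Walk a b),
        (∃ m, m < j ∧ (a : V) ∈ D.bag m) → (∃ m, m < j ∧ (b : V) ∈ D.bag m) := by
      intro a b p
      induction p with
      | nil => exact id
      | cons h p ih => exact fun hl => ih (step _ _ h hl)
    have hLu : ∃ m, m < j ∧ u ∈ D.bag m := by
      refine ⟨i, lt_of_le_of_ne hij ?_, hbi⟩
      intro h; exact hjprop u hu (h ▸ hbi)
    obtain ⟨p⟩ := (hconn t).preconnected ⟨u, hu⟩ ⟨u', hu'⟩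
    obtain ⟨m, hm, hbm⟩ := walkind _ _ p hLu
    exact hjprop u' hu' (D.interp m j k hm.le hjk u' hbm hbk)
  let mn : Fin 4 → Fin D.n := fun t => (J t).min' (Jne t)
  obtain ⟨t0, -, hmax⟩ := Finset.exists_max_image Finset.univ mn ⟨0, Finset.mem_univ 0⟩
  have hall : ∀ t, mn t0 ∈ J t := by
    intro t
    by_cases h : t = t0
    · rw [h]; exact (J t0).min'_mem (Jne t0)
    · obtain ⟨i, hit, hit0⟩ := pair t t0 h
      exact INT t (mn t) (mn t0) i (hmax t (Finset.mem_univ t)) ((J t0).min'_le i hit0)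
        ((J t).min'_mem (Jne t)) hit
  have hex : ∀ t, ∃ v, v ∈ S t ∧ v ∈ D.bag (mn t0) := by
    intro t; obtain ⟨v, hv, hb⟩ := (memJ t _).1 (hall t); exact ⟨v, hv, hb⟩
  choose v hvS hvB using hex
  refine ⟨mn t0, ?_⟩
  have hcard : (Finset.univ : Finset (Fin 4)).card ≤ (D.bag (mn t0)).card := by
    apply Finset.card_le_card_of_injOn v (fun t _ => hvB t)
    intro t _ t' _ h
    by_contra hne
    exact ((hdisj t t' hne).ne_of_mem (hvS t) (hvS t')) h
  simpa using hcard

private lemma my_decomp [Fintype V] (G : SimpleGraph V) (h : pathWidth G ≤ 2) :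
    ∃ D : PathDecomp G, ∀ i, (D.bag i).card ≤ 3 := by
  classical
  have hne : {w | ∃ D : PathDecomp G, D.width = w}.Nonempty :=
    ⟨PathDecomp.width ⟨1, fun _ => Finset.univ, fun v => ⟨0, Finset.mem_univ v⟩,
      fun u w _ => ⟨0, Finset.mem_univ u, Finset.mem_univ w⟩,
      fun _ _ _ _ _ v _ _ => Finset.mem_univ v⟩, _, rfl⟩
  obtain ⟨D, hD⟩ := Nat.sInf_mem hne
  refine ⟨D, fun i => ?_⟩
  have hw : D.width ≤ 2 := by rw [hD]; exact h
  have hsup : (D.bag i).card ≤ Finset.univ.sup (fun i => (D.bag i).card) :=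
    Finset.le_sup (f := fun i => (D.bag i).card) (Finset.mem_univ i)
  unfold PathDecomp.width at hw
  omega
private lemma my_k4 (G : SimpleGraph V) (D : PathDecomp G) (d : ℕ → V) (n j2 j3 j4 : ℕ)
    (hper : ∀ m, d (m + n) = d m)
    (hinj : ∀ m, m < n → ∀ m', m' < n → d m = d m' → m = m')
    (hadj : ∀ m, G.Adj (d m) (d (m + 1)))
    (h02 : 0 < j2) (h23 : j2 < j3) (h34 : j3 < j4) (h4n : j4 < n)
    (Ia Ib : Set V)
    (hIa : ∀ v ∈ Ia, ∀ m, m < n → v ≠ d m)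
    (hIb : ∀ v ∈ Ib, ∀ m, m < n → v ≠ d m)
    (hab : Disjoint Ia Ib)
    (hca : (G.induce (insert (d 0) Ia)).Connected)
    (hcb : (G.induce (insert (d j2) Ib)).Connected)
    (hea : ∃ u ∈ insert (d 0) Ia, G.Adj u (d j3))
    (heb : ∃ u ∈ insert (d j2) Ib, G.Adj u (d j4)) :
    ∃ i, 4 ≤ (D.bag i).card := by
  classical
  set A1 : Set V := d '' Set.Ico 0 j2 with hA1
  set A2 : Set V := d '' Set.Ico j2 j3 with hA2
  set A3 : Set V := d '' Set.Ico j3 j4 with hA3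
  set A4 : Set V := d '' Set.Ico j4 n with hA4
  set S1 : Set V := A1 ∪ Ia with hS1
  set S2 : Set V := A2 ∪ Ib with hS2
  have hd0A1 : d 0 ∈ A1 := ⟨0, by simp only [Set.mem_Ico]; omega, rfl⟩
  have hdj2A2 : d j2 ∈ A2 := ⟨j2, by simp only [Set.mem_Ico]; omega, rfl⟩
  have hdj3A3 : d j3 ∈ A3 := ⟨j3, by simp only [Set.mem_Ico]; omega, rfl⟩
  have hdj4A4 : d j4 ∈ A4 := ⟨j4, by simp only [Set.mem_Ico]; omega, rfl⟩
  have arcdisj : ∀ a b c e : ℕ, b ≤ c → e ≤ n →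
      Disjoint (d '' Set.Ico a b) (d '' Set.Ico c e) := by
    intro a b c e hbc hen
    rw [Set.disjoint_left]
    rintro y ⟨m, hm, rfl⟩ ⟨m', hm', hy⟩
    rw [Set.mem_Ico] at hm hm'
    have := hinj m' (by omega) m (by omega) hy
    omega
  have hIadisj : ∀ a b : ℕ, b ≤ n → Disjoint Ia (d '' Set.Ico a b) := by
    intro a b hb; rw [Set.disjoint_left]; rintro y hy ⟨m, hm, rfl⟩
    rw [Set.mem_Ico] at hm
    exact hIa _ hy m (by omega) rfl
  have hIbdisj : ∀ a b : ℕ, b ≤ n → Disjoint Ib (d '' Set.Ico a b) := by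
    intro a b hb; rw [Set.disjoint_left]; rintro y hy ⟨m, hm, rfl⟩
    rw [Set.mem_Ico] at hm
    exact hIb _ hy m (by omega) rfl
  have d12 : Disjoint S1 S2 := by
    rw [hS1, hS2, Set.disjoint_union_left]
    constructor
    · rw [Set.disjoint_union_right]
      exact ⟨arcdisj 0 j2 j2 j3 le_rfl (by omega), (hIbdisj 0 j2 (by omega)).symm⟩
    · rw [Set.disjoint_union_right]
      exact ⟨hIadisj j2 j3 (by omega), hab⟩
  have d13 : Disjoint S1 A3 := by
    rw [hS1, Set.disjoint_union_left]
    exact ⟨arcdisj 0 j2 j3 j4 (by omega) (by omega), hIadisj j3 j4 (by omega)⟩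
  have d14 : Disjoint S1 A4 := by
    rw [hS1, Set.disjoint_union_left]
    exact ⟨arcdisj 0 j2 j4 n (by omega) le_rfl, hIadisj j4 n le_rfl⟩
  have d23 : Disjoint S2 A3 := by
    rw [hS2, Set.disjoint_union_left]
    exact ⟨arcdisj j2 j3 j3 j4 le_rfl (by omega), hIbdisj j3 j4 (by omega)⟩
  have d24 : Disjoint S2 A4 := by
    rw [hS2, Set.disjoint_union_left]
    exact ⟨arcdisj j2 j3 j4 n (by omega) le_rfl, hIbdisj j4 n le_rfl⟩
  have d34 : Disjoint A3 A4 := arcdisj j3 j4 j4 n le_rfl le_rfl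
  have c1 : (G.induce S1).Connected := by
    have hS1eq : A1 ∪ insert (d 0) Ia = S1 := by
      rw [hS1]
      ext y
      simp only [Set.mem_union, Set.mem_insert_iff]
      constructor
      · rintro (h | rfl | h)
        · exact Or.inl h
        · exact Or.inl hd0A1
        · exact Or.inr h
      · rintro (h | h)
        · exact Or.inl h
        · exact Or.inr (Or.inr h)
    rw [← hS1eq]
    refine SimpleGraph.induce_union_connected ?_ hca.preconnected ⟨d 0, hd0A1, Set.mem_insert _ _⟩
    rw [hA1]; exact (my_arc_conn' G d hadj h02).preconnected
  have c2 : (G.induce S2).Connected := by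
    have hS2eq : A2 ∪ insert (d j2) Ib = S2 := by
      rw [hS2]
      ext y
      simp only [Set.mem_union, Set.mem_insert_iff]
      constructor
      · rintro (h | rfl | h)
        · exact Or.inl h
        · exact Or.inl hdj2A2
        · exact Or.inr h
      · rintro (h | h)
        · exact Or.inl h
        · exact Or.inr (Or.inr h)
    rw [← hS2eq]
    refine SimpleGraph.induce_union_connected ?_ hcb.preconnected ⟨d j2, hdj2A2, Set.mem_insert _ _⟩
    rw [hA2]; exact (my_arc_conn' G d hadj h23).preconnected
  have c3 : (G.induce A3).Connected := by rw [hA3]; exact my_arc_conn' G d hadj h34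
  have c4 : (G.induce A4).Connected := by rw [hA4]; exact my_arc_conn' G d hadj h4n
  have e12 : ∃ u ∈ S1, ∃ u' ∈ S2, G.Adj u u' := by
    refine ⟨d (j2 - 1), Or.inl ⟨j2 - 1, by simp only [Set.mem_Ico]; omega, rfl⟩,
      d j2, Or.inl hdj2A2, ?_⟩
    have h := hadj (j2 - 1)
    rwa [show j2 - 1 + 1 = j2 by omega] at h
  have e23 : ∃ u ∈ S2, ∃ u' ∈ A3, G.Adj u u' := by
    refine ⟨d (j3 - 1), Or.inl ⟨j3 - 1, by simp only [Set.mem_Ico]; omega, rfl⟩,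
      d j3, hdj3A3, ?_⟩
    have h := hadj (j3 - 1)
    rwa [show j3 - 1 + 1 = j3 by omega] at h
  have e34 : ∃ u ∈ A3, ∃ u' ∈ A4, G.Adj u u' := by
    refine ⟨d (j4 - 1), ⟨j4 - 1, by simp only [Set.mem_Ico]; omega, rfl⟩,
      d j4, hdj4A4, ?_⟩
    have h := hadj (j4 - 1)
    rwa [show j4 - 1 + 1 = j4 by omega] at h
  have e41 : ∃ u ∈ A4, ∃ u' ∈ S1, G.Adj u u' := by
    refine ⟨d (n - 1), ⟨n - 1, by simp only [Set.mem_Ico]; omega, rfl⟩,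
      d 0, Or.inl hd0A1, ?_⟩
    have h := hadj (n - 1)
    rw [show n - 1 + 1 = n by omega] at h
    have h2 : d n = d 0 := by have := hper 0; rwa [Nat.zero_add] at this
    rwa [h2] at h
  have e13 : ∃ u ∈ S1, ∃ u' ∈ A3, G.Adj u u' := by
    obtain ⟨u, hu, hadj'⟩ := hea
    refine ⟨u, ?_, d j3, hdj3A3, hadj'⟩
    rcases hu with rfl | hu
    · exact Or.inl hd0A1
    · exact Or.inr hu
  have e24 : ∃ u ∈ S2, ∃ u' ∈ A4, G.Adj u u' := by
    obtain ⟨u, hu, hadj'⟩ := heb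
    refine ⟨u, ?_, d j4, hdj4A4, hadj'⟩
    rcases hu with rfl | hu
    · exact Or.inl hdj2A2
    · exact Or.inr hu
  have sym : ∀ {A B : Set V}, (∃ u ∈ A, ∃ u' ∈ B, G.Adj u u') →
      (∃ u ∈ B, ∃ u' ∈ A, G.Adj u u') := by
    rintro A B ⟨u, hu, u', hu', h⟩; exact ⟨u', hu', u, hu, h.symm⟩
  apply my_bag_big G D ![S1, S2, A3, A4]
  · intro t
    fin_cases t
    · exact c1
    · exact c2
    · exact c3
    · exact c4
  · intro t t' h
    fin_cases t <;> fin_cases t' <;>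
      first
        | exact absurd rfl h
        | exact d12 | exact d13 | exact d14 | exact d23 | exact d24 | exact d34
        | exact d12.symm | exact d13.symm | exact d14.symm | exact d23.symm
        | exact d24.symm | exact d34.symm
  · intro t t' h
    fin_cases t <;> fin_cases t' <;>
      first
        | exact absurd rfl h
        | exact e12 | exact e13 | exact e23 | exact e34 | exact e24 | exact sym e41
        | exact sym e12 | exact sym e13 | exact sym e23 | exact sym e34 | exact sym e24
        | exact e41
private lemma my_exists_adj [Fintype V] (G : SimpleGraph V) (hconn : G.Connected)
    (h3 : 3 ≤ Nat.card V) (v : V) : ∃ w, G.Adj v w := by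
  have h1 : 1 < Fintype.card V := by
    rw [Nat.card_eq_fintype_card] at h3; omega
  obtain ⟨w, hw⟩ := Fintype.exists_ne_of_one_lt_card h1 v
  obtain ⟨p⟩ := hconn.preconnected v w
  cases p with
  | nil => exact absurd rfl hw
  | cons h p => exact ⟨_, h⟩

private lemma my_twoconn_conn [Fintype V] (G : SimpleGraph V) (h : TwoConnected G) :
    G.Connected := by
  obtain ⟨h3, hind⟩ := h
  classical
  have hcard : 3 ≤ Fintype.card V := by rwa [Nat.card_eq_fintype_card] at h3
  have hne : Nonempty V := Fintype.card_pos_iff.1 (by omega)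
  haveI := hne
  refine ⟨fun a b => ?_⟩
  have hex : ∃ w : V, w ≠ a ∧ w ≠ b := by
    by_contra hcon
    push_neg at hcon
    have hsub : (Finset.univ : Finset V) ⊆ {a, b} := by
      intro z _
      by_cases hz : z = a
      · simp [hz]
      · simp [hcon z hz]
    have hle := Finset.card_le_card hsub
    have h2 : ({a, b} : Finset V).card ≤ 2 :=
      (Finset.card_insert_le a {b}).trans (by simp)
    rw [Finset.card_univ] at hle
    omega
  obtain ⟨w, hwa, hwb⟩ := hex
  have haw : (a : V) ∈ ({w}ᶜ : Set V) := by
    simp only [Set.mem_compl_iff, Set.mem_singleton_iff]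
    exact fun h' => hwa h'.symm
  have hbw : (b : V) ∈ ({w}ᶜ : Set V) := by
    simp only [Set.mem_compl_iff, Set.mem_singleton_iff]
    exact fun h' => hwb h'.symm
  have hr := (hind w).preconnected ⟨a, haw⟩ ⟨b, hbw⟩
  exact hr.map (SimpleGraph.Embedding.induce ({w}ᶜ : Set V)).toHom

private lemma my_comp_subset (G : SimpleGraph V) {S N1 N2 : Set V}
    (h1 : IsCompOf G S N1) (h2 : IsCompOf G S N2) {a : V} (ha1 : a ∈ N1) (ha2 : a ∈ N2) :
    N1 ⊆ N2 := by
  intro b hb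
  have ind : ∀ (u w : (N1 : Set V)) (_ : (G.induce N1).Walk u w),
      (u : V) ∈ N2 → (w : V) ∈ N2 := by
    intro u w p
    induction p with
    | nil => exact id
    | cons hadj q ih =>
      rename_i u' v' w'
      intro hu
      apply ih
      have hGad : G.Adj (u' : V) (v' : V) := hadj
      have hv'nS : (v' : V) ∉ S := h1.2.1 v'.2
      exact h2.2.2.2 u' hu v' hv'nS hGad
  obtain ⟨p⟩ := h1.2.2.1.preconnected ⟨a, ha1⟩ ⟨b, hb⟩
  exact ind _ _ p ha2

private lemma my_verts_sub (G : SimpleGraph V) {S N : Set V} (h : IsCompOf G S N) :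
    (bridgeFromComp G N).verts \ S ⊆ N := by
  rintro v ⟨(⟨b, hadj, hor⟩ : ∃ b, G.Adj v b ∧ (v ∈ N ∨ b ∈ N)), hvS⟩
  rcases hor with h1 | h1
  · exact h1
  · exact h.2.2.2 b h1 v hvS hadj.symm

private lemma my_chord_verts_empty (G : SimpleGraph V) {x : V} {C : G.Walk x x}
    {a b : V} (hadj : G.Adj a b) (hma : a ∈ C.support) (hmb : b ∈ C.support) :
    (G.subgraphOfAdj hadj).verts \ {v | v ∈ C.support} = ∅ := by
  rw [Set.eq_empty_iff_forall_notMem]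
  rintro y ⟨hy, hnS⟩
  simp only [SimpleGraph.subgraphOfAdj_verts, Set.mem_insert_iff,
    Set.mem_singleton_iff] at hy
  rcases hy with rfl | rfl
  · exact hnS hma
  · exact hnS hmb

private lemma my_bridge_disj (G : SimpleGraph V) {x : V} {C : G.Walk x x} {B1 B2 : G.Subgraph}
    (h1 : IsBridgeOf G C B1) (h2 : IsBridgeOf G C B2) (hne : B1 ≠ B2) :
    Disjoint (B1.verts \ {v | v ∈ C.support}) (B2.verts \ {v | v ∈ C.support}) := by
  rcases h1 with ⟨N1, hN1, rfl⟩ | ⟨a, b, hadj, hma, hmb, -, rfl⟩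
  · rcases h2 with ⟨N2, hN2, rfl⟩ | ⟨a, b, hadj, hma, hmb, -, rfl⟩
    · rw [Set.disjoint_left]
      intro v hv1 hv2
      have hv1' := my_verts_sub G hN1 hv1
      have hv2' := my_verts_sub G hN2 hv2
      have hNN : N1 = N2 := Set.Subset.antisymm
        (my_comp_subset G hN1 hN2 hv1' hv2') (my_comp_subset G hN2 hN1 hv2' hv1')
      exact hne (by rw [hNN])
    · rw [my_chord_verts_empty G hadj hma hmb]
      exact Set.disjoint_empty _
  · rw [my_chord_verts_empty G hadj hma hmb]
    exact Set.empty_disjoint _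

private lemma my_bridge_blob [Fintype V] (G : SimpleGraph V) (hconn : G.Connected)
    (h3 : 3 ≤ Nat.card V) {x : V} {C : G.Walk x x} {B : G.Subgraph}
    (hB : IsBridgeOf G C B) {a a' : V} (ha : a ∈ legs C B) (ha' : a' ∈ legs C B)
    (hne : a ≠ a') :
    ∃ I : Set V, I ⊆ B.verts \ {v | v ∈ C.support} ∧
      (G.induce (insert a I)).Connected ∧ ∃ u ∈ insert a I, G.Adj u a' := by
  rcases hB with ⟨N, hN, rfl⟩ | ⟨p, q, hadj, hp, hq, -, rfl⟩
  · obtain ⟨(⟨b, hab, hor⟩ : ∃ b, G.Adj a b ∧ (a ∈ N ∨ b ∈ N)), haC⟩ := ha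
    obtain ⟨(⟨b', hab', hor'⟩ : ∃ b, G.Adj a' b ∧ (a' ∈ N ∨ b ∈ N)), haC'⟩ := ha'
    have haN : a ∉ N := fun h => (hN.2.1 h) haC
    have haN' : a' ∉ N := fun h => (hN.2.1 h) haC'
    have hbN : b ∈ N := hor.resolve_left haN
    have hbN' : b' ∈ N := hor'.resolve_left haN'
    refine ⟨N, ?_, ?_, ⟨b', Set.mem_insert_of_mem _ hbN', hab'.symm⟩⟩
    · intro v hv
      refine ⟨?_, hN.2.1 hv⟩
      obtain ⟨w, hw⟩ := my_exists_adj G hconn h3 v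
      exact ⟨w, hw, Or.inl hv⟩
    · exact my_insert_conn G hN.2.2.1 hbN hab
  · obtain ⟨hav, haC⟩ := ha
    obtain ⟨hav', haC'⟩ := ha'
    simp only [SimpleGraph.subgraphOfAdj_verts, Set.mem_insert_iff,
      Set.mem_singleton_iff] at hav hav'
    have hAdj : G.Adj a a' := by
      rcases hav with rfl | rfl <;> rcases hav' with rfl | rfl
      · exact absurd rfl hne
      · exact hadj
      · exact hadj.symm
      · exact absurd rfl hne
    refine ⟨∅, Set.empty_subset _, ?_, a, Set.mem_insert _ _, hAdj⟩
    rw [insert_empty_eq]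
    exact my_singleton_conn G a

private lemma my_support_getD {G : SimpleGraph V} (z : V) :
    ∀ {u w : V} (p : G.Walk u w) (i : ℕ), i ≤ p.length → p.support.getD i z = p.getVert i := by
  intro u w p
  induction p with
  | nil =>
    intro i hi
    have : i = 0 := by simpa using hi
    subst this
    simp [SimpleGraph.Walk.support_nil, SimpleGraph.Walk.getVert]
  | cons h q ih =>
    intro i hi
    cases i with
    | zero =>
      simp [SimpleGraph.Walk.support_cons, SimpleGraph.Walk.getVert_zero]
    | succ m =>
      rw [SimpleGraph.Walk.support_cons, List.getD_cons_succ,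
        SimpleGraph.Walk.getVert_cons_succ]
      exact ih m (by simpa [SimpleGraph.Walk.length_cons] using hi)
private lemma my_legs_def {G : SimpleGraph V} {x : V} {C : G.Walk x x} {B : G.Subgraph}
    {v : V} (h : v ∈ legs C B) : v ∈ B.verts ∧ v ∈ C.support := h

private lemma my_mem_tail {G : SimpleGraph V} {x : V} {C : G.Walk x x} (hCyc : C.IsCycle)
    {v : V} (hv : v ∈ C.support) : v ∈ C.support.tail := by
  have hsupp : C.support = x :: C.support.tail := C.support_eq_cons
  set L := C.support.tail with hLd
  have hlen : L.length = C.length := by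
    have h := C.length_support
    rw [hsupp] at h
    simp only [List.length_cons] at h
    omega
  have hn3 : 3 ≤ L.length := by rw [hlen]; exact hCyc.three_le_length
  have hxL : x ∈ L := by
    have h1 := my_support_getD x C ((L.length - 1) + 1) (by omega)
    rw [hsupp, List.getD_cons_succ] at h1
    have h2 : C.getVert (L.length - 1 + 1) = x := by
      rw [show L.length - 1 + 1 = C.length by omega]
      exact C.getVert_length
    have hlt : L.length - 1 < L.length := by omega
    have h3 : L.getD (L.length - 1) x = L[L.length - 1]'hlt :=
      List.getD_eq_getElem _ _ hlt
    have h4 : L[L.length - 1]'hlt = x := by rw [← h3, h1, h2]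
    rw [← h4]
    exact List.getElem_mem _
  rw [hsupp] at hv
  rcases List.mem_cons.1 hv with rfl | hv'
  · exact hxL
  · exact hv'

private lemma my_core [Fintype V] [DecidableEq V] (G : SimpleGraph V)
    (h2c : TwoConnected G) (hpw : pathWidth G ≤ 2) {x : V} (C : G.Walk x x)
    (hCyc : C.IsCycle) (Bx By : G.Subgraph)
    (hBx : IsBridgeOf G C Bx) (hBy : IsBridgeOf G C By) (hxy : Bx ≠ By)
    (v1 v2 v3 v4 : V)
    (hv1 : v1 ∈ legs C Bx) (hv3 : v3 ∈ legs C Bx)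
    (hv2 : v2 ∈ legs C By) (hv4 : v4 ∈ legs C By)
    (h12 : C.support.tail.idxOf v1 < C.support.tail.idxOf v2)
    (h23 : C.support.tail.idxOf v2 < C.support.tail.idxOf v3)
    (h34 : C.support.tail.idxOf v3 < C.support.tail.idxOf v4) :
    False := by
  classical
  have hconn : G.Connected := my_twoconn_conn G h2c
  set L := C.support.tail with hLdef
  set n := L.length with hndef
  have hsupp : C.support = x :: L := C.support_eq_cons
  have hnodup : L.Nodup := hCyc.support_nodup
  have hlen : n = C.length := by
    have h := C.length_support
    rw [hsupp] at h
    simp only [List.length_cons] at h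
    omega
  have hn3 : 3 ≤ n := by rw [hlen]; exact hCyc.three_le_length
  have hgetD : ∀ m, m < n → L.getD m x = C.getVert (m + 1) := by
    intro m hm
    have h1 : C.support.getD (m + 1) x = C.getVert (m + 1) :=
      my_support_getD x C (m + 1) (by omega)
    rw [hsupp, List.getD_cons_succ] at h1
    exact h1
  have key : ∀ w : V, w ∈ L → C.getVert (L.idxOf w + 1) = w := by
    intro w hw
    have h1 : L.idxOf w < n := List.idxOf_lt_length_iff.2 hw
    have h2 : L.getD (L.idxOf w) x = w := by
      rw [List.getD_eq_getElem _ _ h1]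
      exact List.getElem_idxOf h1
    rw [← hgetD _ h1, h2]
  set k1 := L.idxOf v1 with hk1
  set k2 := L.idxOf v2 with hk2
  set k3 := L.idxOf v3 with hk3
  set k4 := L.idxOf v4 with hk4
  have hm1 : v1 ∈ L := my_mem_tail hCyc (my_legs_def hv1).2
  have hm2 : v2 ∈ L := my_mem_tail hCyc (my_legs_def hv2).2
  have hm3 : v3 ∈ L := my_mem_tail hCyc (my_legs_def hv3).2
  have hm4 : v4 ∈ L := my_mem_tail hCyc (my_legs_def hv4).2
  have hk4n : k4 < n := List.idxOf_lt_length_iff.2 hm4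
  set d : ℕ → V := fun m => C.getVert ((m + k1) % n + 1) with hddef
  have hper : ∀ m, d (m + n) = d m := by
    intro m
    simp only [hddef]
    rw [show m + n + k1 = m + k1 + n by omega, Nat.add_mod_right]
  have hdL : ∀ m, d m = L.getD ((m + k1) % n) x := by
    intro m
    rw [hgetD _ (Nat.mod_lt _ (by omega))]
  have hinjd : ∀ m, m < n → ∀ m', m' < n → d m = d m' → m = m' := by
    intro m hm m' hm' heq
    rw [hdL, hdL] at heq
    have e1 : (m + k1) % n < n := Nat.mod_lt _ (by omega)
    have e2 : (m' + k1) % n < n := Nat.mod_lt _ (by omega)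
    rw [List.getD_eq_getElem _ _ e1, List.getD_eq_getElem _ _ e2] at heq
    have hidx : (m + k1) % n = (m' + k1) % n := by
      have i1 := List.Nodup.idxOf_getElem hnodup _ e1
      have i2 := List.Nodup.idxOf_getElem hnodup _ e2
      rw [← i1, ← i2, heq]
    have hmm : Nat.ModEq n (m + k1) (m' + k1) := hidx
    have hmm2 := Nat.ModEq.add_right_cancel' k1 hmm
    have : m % n = m' % n := hmm2
    rwa [Nat.mod_eq_of_lt hm, Nat.mod_eq_of_lt hm'] at this
  have hadjd : ∀ m, G.Adj (d m) (d (m + 1)) := by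
    intro m
    simp only [hddef]
    have hr : (m + k1) % n < n := Nat.mod_lt _ (by omega)
    have hstep : (m + 1 + k1) % n = ((m + k1) % n + 1) % n := by
      rw [show m + 1 + k1 = (m + k1) + 1 by omega, Nat.add_mod (m + k1) 1 n,
        Nat.mod_eq_of_lt (show 1 < n by omega)]
    by_cases hcase : (m + k1) % n + 1 < n
    · rw [hstep, Nat.mod_eq_of_lt hcase]
      exact C.adj_getVert_succ (by rw [← hlen]; omega)
    · have hr1 : (m + k1) % n + 1 = n := by omega
      rw [hstep, hr1, Nat.mod_self]
      have hx1 : C.getVert n = x := by rw [hlen]; exact C.getVert_length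
      have h0 := C.adj_getVert_succ (show 0 < C.length by rw [← hlen]; omega)
      rw [C.getVert_zero] at h0
      rw [hx1]
      exact h0
  have hdval : ∀ w : V, w ∈ L → k1 ≤ L.idxOf w → d (L.idxOf w - k1) = w := by
    intro w hw hle
    have h1 : L.idxOf w < n := List.idxOf_lt_length_iff.2 hw
    simp only [hddef]
    rw [show L.idxOf w - k1 + k1 = L.idxOf w by omega, Nat.mod_eq_of_lt h1]
    exact key w hw
  have hd0 : d 0 = v1 := by
    have h := hdval v1 hm1 (le_of_eq hk1)
    rwa [← hk1, Nat.sub_self] at h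
  have hd2 : d (k2 - k1) = v2 := by
    have h := hdval v2 hm2 (by omega)
    rwa [← hk2] at h
  have hd3 : d (k3 - k1) = v3 := by
    have h := hdval v3 hm3 (by omega)
    rwa [← hk3] at h
  have hd4 : d (k4 - k1) = v4 := by
    have h := hdval v4 hm4 (by omega)
    rwa [← hk4] at h
  have hne13 : v1 ≠ v3 := by
    intro h
    have : k1 = k3 := by rw [hk1, hk3, h]
    omega
  have hne24 : v2 ≠ v4 := by
    intro h
    have : k2 = k4 := by rw [hk2, hk4, h]
    omega
  obtain ⟨Ia, hIasub, hIaconn, hIaedge⟩ :=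
    my_bridge_blob G hconn h2c.1 hBx hv1 hv3 hne13
  obtain ⟨Ib, hIbsub, hIbconn, hIbedge⟩ :=
    my_bridge_blob G hconn h2c.1 hBy hv2 hv4 hne24
  have hdS : ∀ m, d m ∈ C.support := by
    intro m
    rw [hdL m]
    have hlt : (m + k1) % n < n := Nat.mod_lt _ (by omega)
    rw [List.getD_eq_getElem _ _ hlt]
    have hmem : L[(m + k1) % n]'hlt ∈ L := List.getElem_mem _
    rw [hsupp]
    exact List.mem_cons_of_mem _ hmem
  have hdisjIab : Disjoint Ia Ib :=
    Set.disjoint_of_subset hIasub hIbsub (my_bridge_disj G hBx hBy hxy)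
  obtain ⟨D, hD⟩ := my_decomp G hpw
  obtain ⟨i, hi⟩ := my_k4 G D d n (k2 - k1) (k3 - k1) (k4 - k1) hper hinjd hadjd
    (by omega) (by omega) (by omega) (by omega) Ia Ib
    (by intro v hv m _ heq; exact (hIasub hv).2 (by rw [heq]; exact hdS m))
    (by intro v hv m _ heq; exact (hIbsub hv).2 (by rw [heq]; exact hdS m))
    hdisjIab
    (by rw [hd0]; exact hIaconn)
    (by rw [hd2]; exact hIbconn)
    (by rw [hd0, hd3]; exact hIaedge)
    (by rw [hd2, hd4]; exact hIbedge)
  have := hD i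
  omega

private lemma my_main_case [Fintype V] [DecidableEq V] (G : SimpleGraph V)
    (h2c : TwoConnected G) (hpw : pathWidth G ≤ 2) {x : V} (C : G.Walk x x)
    (hCyc : C.IsCycle) (B₁ B₂ : G.Subgraph)
    (hB₁ : IsBridgeOf G C B₁) (hB₂ : IsBridgeOf G C B₂) (hne : B₁ ≠ B₂)
    (a1 a2 bb bb' : V)
    (ha1 : a1 ∈ legs C B₁) (ha2 : a2 ∈ legs C B₁)
    (hbb : bb ∈ legs C B₂) (hbb' : bb' ∈ legs C B₂)
    (d1 : a1 ≠ bb') (d2 : a2 ≠ bb')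
    (hP : posBetween C.support.tail a1 a2 bb)
    (hnQ : ¬ posBetween C.support.tail a1 a2 bb') : False := by
  classical
  set L := C.support.tail with hL
  have hm1 : a1 ∈ L := my_mem_tail hCyc (my_legs_def ha1).2
  have hm2 : a2 ∈ L := my_mem_tail hCyc (my_legs_def ha2).2
  have hmb : bb ∈ L := my_mem_tail hCyc (my_legs_def hbb).2
  have hmb' : bb' ∈ L := my_mem_tail hCyc (my_legs_def hbb').2
  unfold posBetween at hP hnQ
  rcases hP with ⟨hq1, hq2⟩ | ⟨hq1, hq2⟩
  · rcases Nat.lt_trichotomy (L.idxOf bb') (L.idxOf a1) with hc | hc | hc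
    · exact my_core G h2c hpw C hCyc B₂ B₁ hB₂ hB₁ (Ne.symm hne) bb' a1 bb a2
        hbb' hbb ha1 ha2 hc hq1 hq2
    · exact d1 (((List.idxOf_inj hmb').1 hc).symm)
    · rcases Nat.lt_trichotomy (L.idxOf bb') (L.idxOf a2) with hd | hd | hd
      · exact hnQ (Or.inl ⟨hc, hd⟩)
      · exact d2 (((List.idxOf_inj hmb').1 hd).symm)
      · exact my_core G h2c hpw C hCyc B₁ B₂ hB₁ hB₂ hne a1 bb a2 bb'
          ha1 ha2 hbb hbb' hq1 hq2 hd
  · rcases Nat.lt_trichotomy (L.idxOf bb') (L.idxOf a2) with hc | hc | hc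
    · exact my_core G h2c hpw C hCyc B₂ B₁ hB₂ hB₁ (Ne.symm hne) bb' a2 bb a1
        hbb' hbb ha2 ha1 hc hq1 hq2
    · exact d2 (((List.idxOf_inj hmb').1 hc).symm)
    · rcases Nat.lt_trichotomy (L.idxOf bb') (L.idxOf a1) with hd | hd | hd
      · exact hnQ (Or.inr ⟨hc, hd⟩)
      · exact d1 (((List.idxOf_inj hmb').1 hd).symm)
      · exact my_core G h2c hpw C hCyc B₁ B₂ hB₁ hB₂ hne a2 bb a1 bb'
          ha2 ha1 hbb hbb' hq1 hq2 hd

end BridgesProofHelpers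

/-- Let `G` be a 2-connected finite simple graph with path-width at most 2 and
let `C` be a longest cycle of `G`. Then no two bridges of `C` cross. -/
theorem bridges_not_crossing {V : Type u} [Fintype V] [DecidableEq V] (G : SimpleGraph V)
    (h2 : TwoConnected G) (hpw : pathWidth G ≤ 2) {x : V} (C : G.Walk x x)
    (hC : IsLongestCycle G C) (B₁ B₂ : G.Subgraph)
    (hB₁ : IsBridgeOf G C B₁) (hB₂ : IsBridgeOf G C B₂) (hne : B₁ ≠ B₂) :
    ¬ BridgesCross C B₁ B₂ := by
  intro hcross
  unfold BridgesCross at hcross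
  obtain ⟨a1, ha1, a2, ha2, b1, hb1, b2, hb2, hcp⟩ := hcross
  unfold CrossingPairs at hcp
  obtain ⟨-, -, d11, d12, d21, d22, hxor⟩ := hcp
  rcases hxor with ⟨hP, hnQ⟩ | ⟨hQ, hnP⟩
  · exact my_main_case G h2 hpw C hC.1 B₁ B₂ hB₁ hB₂ hne a1 a2 b1 b2
      ha1 ha2 hb1 hb2 d12 d22 hP hnQ
  · exact my_main_case G h2 hpw C hC.1 B₁ B₂ hB₁ hB₂ hne a1 a2 b2 b1
      ha1 ha2 hb2 hb1 d11 d21 hQ hnP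
end

section
/- Every partial track has path-width at most 2. -/
open SimpleGraph

universe u v

section TrackAux
open scoped Classical

namespace TrackPW

open scoped Classical

variable {W : Type u} {H : SimpleGraph W} (T : TrackRep H)

/-- chord set in ℕ coordinates -/
noncomputable def Cf : Finset (ℕ × ℕ) :=
  (Set.Finite.image (fun c : Fin T.k × Fin T.l => ((c.1 : ℕ), (c.2 : ℕ)))
    (Set.toFinite (T.short ∪ T.ends '' T.M))).toFinset

lemma mem_Cf {c : ℕ × ℕ} :
    c ∈ Cf T ↔ ∃ d ∈ T.short ∪ T.ends '' T.M, ((d.1 : ℕ), (d.2 : ℕ)) = c := by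
  simp [Cf, Set.Finite.mem_toFinset, Set.mem_image]

lemma Cf_lt {c : ℕ × ℕ} (hc : c ∈ Cf T) : c.1 < T.k ∧ c.2 < T.l := by
  rw [mem_Cf] at hc
  obtain ⟨d, _, hd⟩ := hc
  exact hd ▸ ⟨d.1.isLt, d.2.isLt⟩

lemma Cf_zero : ((0 : ℕ), (0 : ℕ)) ∈ Cf T := by
  rw [mem_Cf]; exact ⟨_, T.first_chord, rfl⟩

lemma Cf_last : ((T.k - 1 : ℕ), (T.l - 1 : ℕ)) ∈ Cf T := by
  rw [mem_Cf]; exact ⟨_, T.last_chord, rfl⟩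

lemma Cf_mono {c c' : ℕ × ℕ} (hc : c ∈ Cf T) (hc' : c' ∈ Cf T) (h : c.1 < c'.1) :
    c.2 ≤ c'.2 := by
  rw [mem_Cf] at hc hc'
  obtain ⟨d, hd, hdc⟩ := hc
  obtain ⟨d', hd', hdc'⟩ := hc'
  have := T.noncross d hd d' hd'
  subst hdc hdc'
  simp only at h ⊢
  nlinarith [this]

noncomputable def hi (a : ℕ) : ℕ := ((Cf T).filter (fun c => c.1 ≤ a)).sup Prod.snd

noncomputable def lo (a : ℕ) : ℕ := ((Cf T).filter (fun c => c.1 < a)).sup Prod.snd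

lemma hi_mono {a a' : ℕ} (h : a ≤ a') : hi T a ≤ hi T a' := by
  apply Finset.sup_mono
  intro c hc
  simp only [Finset.mem_filter] at hc ⊢
  exact ⟨hc.1, le_trans hc.2 h⟩

lemma lo_zero : lo T 0 = 0 := by
  simp [lo]

lemma lo_succ (a : ℕ) : lo T (a + 1) = hi T a := by
  unfold lo hi
  congr 1
  apply Finset.filter_congr
  intro c _
  simp [Nat.lt_succ_iff]

lemma lo_le_hi (a : ℕ) : lo T a ≤ hi T a := by
  apply Finset.sup_mono
  intro c hc
  simp only [Finset.mem_filter] at hc ⊢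
  exact ⟨hc.1, le_of_lt hc.2⟩

lemma lo_mono {a a' : ℕ} (h : a ≤ a') : lo T a ≤ lo T a' := by
  apply Finset.sup_mono
  intro c hc
  simp only [Finset.mem_filter] at hc ⊢
  exact ⟨hc.1, lt_of_lt_of_le hc.2 h⟩

lemma hi_lt_l (a : ℕ) : hi T a < T.l := by
  rw [hi, Finset.sup_lt_iff T.lpos]
  intro c hc
  exact (Cf_lt T (Finset.mem_filter.mp hc).1).2

lemma hi_last : hi T (T.k - 1) = T.l - 1 := by
  apply le_antisymm
  · apply Finset.sup_le
    intro c hc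
    have := (Cf_lt T (Finset.mem_filter.mp hc).1).2
    omega
  · have hm : ((T.k - 1 : ℕ), (T.l - 1 : ℕ)) ∈ (Cf T).filter (fun c => c.1 ≤ T.k - 1) :=
      Finset.mem_filter.mpr ⟨Cf_last T, le_refl _⟩
    have := Finset.le_sup (f := Prod.snd) hm
    simpa [hi] using this

lemma chord_range {c : ℕ × ℕ} (hc : c ∈ Cf T) : lo T c.1 ≤ c.2 ∧ c.2 ≤ hi T c.1 := by
  constructor
  · apply Finset.sup_le
    intro d hd
    obtain ⟨hd1, hd2⟩ := Finset.mem_filter.mp hd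
    exact Cf_mono T hd1 hc hd2
  · exact Finset.le_sup (f := Prod.snd) (Finset.mem_filter.mpr ⟨hc, le_refl _⟩)

end TrackPW

namespace TrackPW

open scoped Classical

variable {W : Type u} {H : SimpleGraph W} (T : TrackRep H)

noncomputable def mids (c : ℕ × ℕ) : List W :=
  (T.M_fin.toFinset.filter
    (fun m => ((T.ends m).1 : ℕ) = c.1 ∧ ((T.ends m).2 : ℕ) = c.2)).toList

lemma mem_mids {m : W} {c : ℕ × ℕ} :
    m ∈ mids T c ↔ m ∈ T.M ∧ ((T.ends m).1 : ℕ) = c.1 ∧ ((T.ends m).2 : ℕ) = c.2 := by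
  simp [mids]

lemma mids_nodup (c : ℕ × ℕ) : (mids T c).Nodup := Finset.nodup_toList _

noncomputable def nm (c : ℕ × ℕ) : ℕ := (mids T c).length

noncomputable def NM : ℕ := T.M_fin.toFinset.card

lemma nm_le_NM (c : ℕ × ℕ) : nm T c ≤ NM T := by
  rw [nm, NM, mids, Finset.length_toList]
  exact Finset.card_filter_le _ _

noncomputable def BE : ℕ := NM T + 1

lemma BE_pos : 0 < BE T := Nat.succ_pos _

noncomputable def P (a : ℕ) : W := if h : a < T.k then T.p ⟨a, h⟩ else T.p ⟨0, T.kpos⟩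

noncomputable def Q (b : ℕ) : W := if h : b < T.l then T.q ⟨b, h⟩ else T.q ⟨0, T.lpos⟩

lemma P_eq_p (i : Fin T.k) : P T (i : ℕ) = T.p i := by
  rw [P, dif_pos i.isLt]

lemma Q_eq_q (j : Fin T.l) : Q T (j : ℕ) = T.q j := by
  rw [Q, dif_pos j.isLt]

lemma P_ne_Q (a b : ℕ) : P T a ≠ Q T b := by
  unfold P Q
  split <;> split <;> exact T.p_ne_q _ _

lemma P_inj {a a' : ℕ} (ha : a < T.k) (ha' : a' < T.k) (h : P T a = P T a') : a = a' := by
  rw [P, dif_pos ha, P, dif_pos ha'] at h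
  exact congrArg Fin.val (T.p_inj h)

lemma Q_inj {b b' : ℕ} (hb : b < T.l) (hb' : b' < T.l) (h : Q T b = Q T b') : b = b' := by
  rw [Q, dif_pos hb, Q, dif_pos hb'] at h
  have := T.q_inj h
  exact congrArg Fin.val this

noncomputable def midAt (c : ℕ × ℕ) (e : ℕ) : W := (mids T c).getD e (T.p ⟨0, T.kpos⟩)

lemma midAt_mem {c : ℕ × ℕ} {e : ℕ} (he : e < nm T c) : midAt T c e ∈ mids T c := by
  rw [midAt, List.getD_eq_getElem _ _ he]
  exact List.getElem_mem _

lemma midAt_mem_M {c : ℕ × ℕ} {e : ℕ} (he : e < nm T c) : midAt T c e ∈ T.M :=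
  ((mem_mids T).mp (midAt_mem T he)).1

lemma midAt_ne_P {c : ℕ × ℕ} {e : ℕ} (he : e < nm T c) (a : ℕ) : midAt T c e ≠ P T a := by
  have := midAt_mem_M T he
  unfold P
  split <;> exact T.M_ne_p this _

lemma midAt_ne_Q {c : ℕ × ℕ} {e : ℕ} (he : e < nm T c) (b : ℕ) : midAt T c e ≠ Q T b := by
  have := midAt_mem_M T he
  unfold Q
  split <;> exact T.M_ne_q this _

/-- encoding of a state (a, b, e) as a natural number (lexicographic) -/
noncomputable def enc (a b e : ℕ) : ℕ := (a * T.l + b) * BE T + e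

noncomputable def nIdx : ℕ := T.k * T.l * BE T

/-- generic lex lemma -/
lemma lex2_le {x y u v D : ℕ} (hy : y < D) (hv : v < D) :
    x * D + y ≤ u * D + v ↔ x < u ∨ (x = u ∧ y ≤ v) := by
  constructor
  · intro h
    rcases Nat.lt_trichotomy x u with h1 | h1 | h1
    · exact Or.inl h1
    · right; exact ⟨h1, by subst h1; omega⟩
    · exfalso
      have h2 : (u + 1) * D ≤ x * D := Nat.mul_le_mul_right D h1
      have h3 : (u + 1) * D = u * D + D := by ring
      omega
  · rintro (h | ⟨rfl, h⟩)
    · have h1 : (x + 1) * D ≤ u * D := Nat.mul_le_mul_right D h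
      have h2 : (x + 1) * D = x * D + D := by ring
      omega
    · omega

lemma lex2_lt {x y u v D : ℕ} (hy : y < D) (hv : v < D) :
    x * D + y < u * D + v ↔ x < u ∨ (x = u ∧ y < v) := by
  constructor
  · intro h
    rcases Nat.lt_trichotomy x u with h1 | h1 | h1
    · exact Or.inl h1
    · right; exact ⟨h1, by subst h1; omega⟩
    · exfalso
      have h2 : (u + 1) * D ≤ x * D := Nat.mul_le_mul_right D h1
      have h3 : (u + 1) * D = u * D + D := by ring
      omega
  · rintro (h | ⟨rfl, h⟩)
    · have h1 : (x + 1) * D ≤ u * D := Nat.mul_le_mul_right D h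
      have h2 : (x + 1) * D = x * D + D := by ring
      omega
    · omega

lemma enc_le_iff {a b e a' b' e' : ℕ} (hb : b < T.l) (hb' : b' < T.l)
    (he : e < BE T) (he' : e' < BE T) :
    enc T a b e ≤ enc T a' b' e' ↔
      a < a' ∨ (a = a' ∧ b < b') ∨ (a = a' ∧ b = b' ∧ e ≤ e') := by
  rw [enc, enc, lex2_le he he']
  have h2 : a * T.l + b = a' * T.l + b' ↔ a = a' ∧ b = b' := by
    constructor
    · intro h
      have := (lex2_le hb hb').mp (le_of_eq h)
      have := (lex2_le hb' hb).mp (le_of_eq h.symm)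
      omega
    · rintro ⟨rfl, rfl⟩; rfl
  rw [lex2_lt hb hb', h2]
  tauto

lemma enc_lt_nIdx {a b e : ℕ} (ha : a < T.k) (hb : b < T.l) (he : e < BE T) :
    enc T a b e < nIdx T := by
  rw [enc, nIdx]
  have h1 : a * T.l + b < T.k * T.l := by
    have h0 : (a + 1) * T.l ≤ T.k * T.l := Nat.mul_le_mul_right _ ha
    have h0' : (a + 1) * T.l = a * T.l + T.l := by ring
    omega
  have h2 : (a * T.l + b + 1) * BE T ≤ T.k * T.l * BE T := Nat.mul_le_mul_right _ h1
  have h3 : (a * T.l + b + 1) * BE T = (a * T.l + b) * BE T + BE T := by ring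
  omega

end TrackPW

namespace TrackPW

open scoped Classical

variable {W : Type u} {H : SimpleGraph W} (T : TrackRep H)

noncomputable def bag0 (a b e : ℕ) : Finset W :=
  if e = nm T (a, b) then
    insert (P T a) (insert (Q T b)
      (if b < hi T a then {Q T (b + 1)} else if a + 1 < T.k then {P T (a + 1)} else ∅))
  else {P T a, Q T b, midAt T (a, b) e}

lemma bag0_card (a b e : ℕ) : (bag0 T a b e).card ≤ 3 := by
  rw [bag0]
  split
  · refine le_trans (Finset.card_insert_le _ _) ?_
    have h2 : ((insert (Q T b)
        (if b < hi T a then {Q T (b + 1)} else if a + 1 < T.k then {P T (a + 1)} else ∅)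
        : Finset W)).card ≤ 2 := by
      refine le_trans (Finset.card_insert_le _ _) ?_
      have : (if b < hi T a then ({Q T (b + 1)} : Finset W)
          else if a + 1 < T.k then {P T (a + 1)} else ∅).card ≤ 1 := by
        split
        · simp
        · split <;> simp
      omega
    omega
  · refine le_trans (Finset.card_insert_le _ _) ?_
    refine Nat.succ_le_succ (le_trans (Finset.card_insert_le _ _) ?_)
    simp

def Valid (a b e : ℕ) : Prop :=
  a < T.k ∧ lo T a ≤ b ∧ b ≤ hi T a ∧ e ≤ nm T (a, b)

noncomputable def clampB (a b : ℕ) : ℕ := min (max b (lo T a)) (hi T a)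

noncomputable def clampE (a b e : ℕ) : ℕ :=
  if b < lo T a then 0
  else if hi T a < b then nm T (a, hi T a)
  else min e (nm T (a, b))

noncomputable def csA (τ : ℕ) : ℕ := τ / BE T / T.l
noncomputable def csBin (τ : ℕ) : ℕ := τ / BE T % T.l
noncomputable def csEin (τ : ℕ) : ℕ := τ % BE T
noncomputable def csB (τ : ℕ) : ℕ := clampB T (csA T τ) (csBin T τ)
noncomputable def csE (τ : ℕ) : ℕ := clampE T (csA T τ) (csBin T τ) (csEin T τ)

noncomputable def Bag (τ : ℕ) : Finset W := bag0 T (csA T τ) (csB T τ) (csE T τ)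

noncomputable def F (τ : ℕ) : ℕ := enc T (csA T τ) (csB T τ) (csE T τ)

lemma clamp_valid {a b e : ℕ} (ha : a < T.k) :
    Valid T a (clampB T a b) (clampE T a b e) := by
  have hlh := lo_le_hi T a
  refine ⟨ha, ?_, ?_, ?_⟩
  · rw [clampB]; omega
  · rw [clampB]; omega
  · rw [clampB, clampE]
    split
    · omega
    · split
      · have : min (max b (lo T a)) (hi T a) = hi T a := by omega
        rw [this]
      · have : min (max b (lo T a)) (hi T a) = b := by omega
        rw [this]; omega

lemma cs_valid {τ : ℕ} (hτ : τ < nIdx T) : Valid T (csA T τ) (csB T τ) (csE T τ) := by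
  apply clamp_valid
  rw [csA, Nat.div_div_eq_div_mul]
  apply Nat.div_lt_of_lt_mul
  have : BE T * T.l * T.k = T.k * T.l * BE T := by ring
  rw [this]
  exact hτ

lemma dec_enc {a b e : ℕ} (hb : b < T.l) (he : e < BE T) :
    csA T (enc T a b e) = a ∧ csBin T (enc T a b e) = b ∧ csEin T (enc T a b e) = e := by
  have hBE := BE_pos T
  have hL : 0 < T.l := T.lpos
  have e1 : (a * T.l + b) * BE T + e = e + BE T * (a * T.l + b) := by ring
  have e2 : a * T.l + b = b + T.l * a := by ring
  have h1 : enc T a b e / BE T = a * T.l + b := by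
    rw [enc, e1, Nat.add_mul_div_left _ _ hBE, Nat.div_eq_of_lt he, zero_add]
  refine ⟨?_, ?_, ?_⟩
  · rw [csA, h1, e2, Nat.add_mul_div_left _ _ hL, Nat.div_eq_of_lt hb, zero_add]
  · rw [csBin, h1, e2, Nat.add_mul_mod_self_left, Nat.mod_eq_of_lt hb]
  · rw [csEin, enc, e1, Nat.add_mul_mod_self_left, Nat.mod_eq_of_lt he]

lemma cs_enc {a b e : ℕ} (hv : Valid T a b e) :
    csA T (enc T a b e) = a ∧ csB T (enc T a b e) = b ∧ csE T (enc T a b e) = e := by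
  obtain ⟨ha, hl, hh, hee⟩ := hv
  have hb : b < T.l := lt_of_le_of_lt hh (hi_lt_l T a)
  have he' : e < BE T := lt_of_le_of_lt (le_trans hee (nm_le_NM T _)) (Nat.lt_succ_self _)
  obtain ⟨h1, h2, h3⟩ := dec_enc T hb he'
  refine ⟨h1, ?_, ?_⟩
  · rw [csB, h1, h2, clampB]; omega
  · rw [csE, h1, h2, h3, clampE, if_neg (by omega), if_neg (by omega)]
    omega

lemma F_enc {a b e : ℕ} (hv : Valid T a b e) : F T (enc T a b e) = enc T a b e := by
  obtain ⟨h1, h2, h3⟩ := cs_enc T hv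
  rw [F, h1, h2, h3]

lemma valid_b_lt {a b e : ℕ} (hv : Valid T a b e) : b < T.l :=
  lt_of_le_of_lt hv.2.2.1 (hi_lt_l T a)

lemma valid_e_lt {a b e : ℕ} (hv : Valid T a b e) : e < BE T :=
  lt_of_le_of_lt (le_trans hv.2.2.2 (nm_le_NM T _)) (Nat.lt_succ_self _)

end TrackPW

namespace TrackPW

open scoped Classical

variable {W : Type u} {H : SimpleGraph W} (T : TrackRep H)

lemma cs_bounds (τ : ℕ) :
    lo T (csA T τ) ≤ csB T τ ∧ csB T τ ≤ hi T (csA T τ) ∧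
      csE T τ ≤ nm T (csA T τ, csB T τ) := by
  have hlh := lo_le_hi T (csA T τ)
  refine ⟨?_, ?_, ?_⟩
  · rw [csB, clampB]; omega
  · rw [csB, clampB]; omega
  · rw [csB, csE, clampB, clampE]
    split
    · omega
    · split
      · have h : min (max (csBin T τ) (lo T (csA T τ))) (hi T (csA T τ)) = hi T (csA T τ) := by
          omega
        rw [h]
      · have h : min (max (csBin T τ) (lo T (csA T τ))) (hi T (csA T τ)) = csBin T τ := by
          omega
        rw [h]; omega

lemma clamp_lex {a b e b' e' : ℕ} (h : b < b') :
    clampB T a b < clampB T a b' ∨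
      (clampB T a b = clampB T a b' ∧ clampE T a b e ≤ clampE T a b' e') := by
  have hlh := lo_le_hi T a
  have h1 : clampE T a b e ≤ nm T (a, clampB T a b) := by
    rw [clampB, clampE]
    split
    · omega
    · split
      · have hh : min (max b (lo T a)) (hi T a) = hi T a := by omega
        rw [hh]
      · have hh : min (max b (lo T a)) (hi T a) = b := by omega
        rw [hh]; omega
  by_cases hb'hi : hi T a < b'
  · have e1 : clampB T a b' = hi T a := by rw [clampB]; omega
    have e2 : clampE T a b' e' = nm T (a, hi T a) := by
      rw [clampE, if_neg (by omega), if_pos hb'hi]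
    have h2 : clampB T a b ≤ hi T a := by rw [clampB]; omega
    rcases lt_or_eq_of_le h2 with h3 | h3
    · left; omega
    · right
      refine ⟨by omega, ?_⟩
      rw [e2, ← h3]
      rw [h3] at h1
      rw [← h3] at h1
      exact h1
  · by_cases hbl : b < lo T a
    · have e1 : clampB T a b = lo T a := by rw [clampB]; omega
      have e2 : clampE T a b e = 0 := by rw [clampE, if_pos hbl]
      have h3 : clampB T a b ≤ clampB T a b' := by rw [clampB, clampB]; omega
      rcases lt_or_eq_of_le h3 with h4 | h4
      · left; exact h4
      · right; exact ⟨h4, by omega⟩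
    · have e1 : clampB T a b = b := by rw [clampB]; omega
      have e2 : clampB T a b' = b' := by rw [clampB]; omega
      left; omega

lemma clampE_mono {a b e e' : ℕ} (h : e ≤ e') : clampE T a b e ≤ clampE T a b e' := by
  rw [clampE, clampE]
  split_ifs <;> omega

lemma F_mono {τ τ' : ℕ} (h : τ ≤ τ') : F T τ ≤ F T τ' := by
  have hb := (cs_bounds T τ).2.1
  have hb' := (cs_bounds T τ').2.1
  have he := (cs_bounds T τ).2.2
  have he' := (cs_bounds T τ').2.2
  have hbl : csB T τ < T.l := lt_of_le_of_lt hb (hi_lt_l T _)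
  have hbl' : csB T τ' < T.l := lt_of_le_of_lt hb' (hi_lt_l T _)
  have hel : csE T τ < BE T :=
    lt_of_le_of_lt (le_trans he (nm_le_NM T _)) (Nat.lt_succ_self _)
  have hel' : csE T τ' < BE T :=
    lt_of_le_of_lt (le_trans he' (nm_le_NM T _)) (Nat.lt_succ_self _)
  rw [F, F, enc_le_iff T hbl hbl' hel hel']
  have hd : τ / BE T ≤ τ' / BE T := Nat.div_le_div_right h
  have hA : csA T τ ≤ csA T τ' := Nat.div_le_div_right hd
  rcases Nat.lt_or_ge (csA T τ) (csA T τ') with hA2 | hA2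
  · exact Or.inl hA2
  have hAeq : csA T τ = csA T τ' := le_antisymm hA hA2
  have hdm := Nat.div_add_mod (τ / BE T) T.l
  have hdm' := Nat.div_add_mod (τ' / BE T) T.l
  have hAeq' : τ / BE T / T.l = τ' / BE T / T.l := hAeq
  rw [hAeq'] at hdm
  have hBin : csBin T τ ≤ csBin T τ' := by
    rw [csBin, csBin]
    omega
  rcases Nat.lt_or_ge (csBin T τ) (csBin T τ') with hB2 | hB2
  · rcases clamp_lex T (e := csEin T τ) (e' := csEin T τ') hB2 with h1 | ⟨h1, h2⟩
    · right; left
      rw [csB, csB, ← hAeq]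
      exact ⟨rfl, h1⟩
    · right; right
      rw [csB, csB, csE, csE, ← hAeq]
      exact ⟨rfl, h1, h2⟩
  · have hBeq : csBin T τ = csBin T τ' := le_antisymm hBin hB2
    have hdeq : τ / BE T = τ' / BE T := by
      rw [csBin, csBin] at hBeq
      omega
    have hEin : csEin T τ ≤ csEin T τ' := by
      have h1 := Nat.div_add_mod τ (BE T)
      have h2 := Nat.div_add_mod τ' (BE T)
      rw [hdeq] at h1
      rw [csEin, csEin]
      omega
    right; right
    rw [csB, csB, csE, csE, ← hAeq, hBeq]
    exact ⟨rfl, rfl, clampE_mono T hEin⟩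

end TrackPW

namespace TrackPW

open scoped Classical

variable {W : Type u} {H : SimpleGraph W} (T : TrackRep H)

lemma charP {x a b e : ℕ} (hx : x < T.k) (hv : Valid T a b e) :
    P T x ∈ bag0 T a b e ↔
      (a = x ∨ (e = nm T (a, b) ∧ hi T a ≤ b ∧ a + 1 < T.k ∧ a + 1 = x)) := by
  obtain ⟨ha, hbl, hbh, hee⟩ := hv
  rw [bag0]
  split_ifs with h1 h2 h3
  · simp only [Finset.mem_insert, Finset.mem_singleton]
    constructor
    · rintro (h | h | h)
      · exact Or.inl (P_inj T ha hx h.symm)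
      · exact absurd h (P_ne_Q T x b)
      · exact absurd h (P_ne_Q T x (b + 1))
    · rintro (rfl | ⟨-, hcon, -⟩)
      · exact Or.inl rfl
      · omega
  · simp only [Finset.mem_insert, Finset.mem_singleton]
    constructor
    · rintro (h | h | h)
      · exact Or.inl (P_inj T ha hx h.symm)
      · exact absurd h (P_ne_Q T x b)
      · exact Or.inr ⟨h1, by omega, h3, P_inj T h3 hx h.symm⟩
    · rintro (rfl | ⟨-, -, -, rfl⟩)
      · exact Or.inl rfl
      · right; right; rfl
  · simp only [Finset.mem_insert, Finset.notMem_empty, or_false, Finset.mem_singleton]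
    constructor
    · rintro (h | h)
      · exact Or.inl (P_inj T ha hx h.symm)
      · exact absurd h (P_ne_Q T x b)
    · rintro (rfl | ⟨-, -, hcon, -⟩)
      · exact Or.inl rfl
      · omega
  · simp only [Finset.mem_insert, Finset.mem_singleton]
    have hlt : e < nm T (a, b) := lt_of_le_of_ne hee h1
    constructor
    · rintro (h | h | h)
      · exact Or.inl (P_inj T ha hx h.symm)
      · exact absurd h (P_ne_Q T x b)
      · exact absurd h.symm (midAt_ne_P T hlt x)
    · rintro (rfl | ⟨hcon, -⟩)
      · exact Or.inl rfl
      · omega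

lemma charQ {y a b e : ℕ} (hy : y < T.l) (hv : Valid T a b e) :
    Q T y ∈ bag0 T a b e ↔
      (b = y ∨ (e = nm T (a, b) ∧ b < hi T a ∧ b + 1 = y)) := by
  obtain ⟨ha, hbl, hbh, hee⟩ := hv
  have hbl2 : b < T.l := lt_of_le_of_lt hbh (hi_lt_l T a)
  rw [bag0]
  split_ifs with h1 h2 h3
  · have hb1l : b + 1 < T.l := lt_of_le_of_lt h2 (hi_lt_l T a)
    simp only [Finset.mem_insert, Finset.mem_singleton]
    constructor
    · rintro (h | h | h)
      · exact absurd h.symm (P_ne_Q T a y)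
      · exact Or.inl (Q_inj T hbl2 hy h.symm)
      · exact Or.inr ⟨h1, h2, Q_inj T hb1l hy h.symm⟩
    · rintro (rfl | ⟨-, -, rfl⟩)
      · exact Or.inr (Or.inl rfl)
      · right; right; rfl
  · simp only [Finset.mem_insert, Finset.mem_singleton]
    constructor
    · rintro (h | h | h)
      · exact absurd h.symm (P_ne_Q T a y)
      · exact Or.inl (Q_inj T hbl2 hy h.symm)
      · exact absurd h.symm (P_ne_Q T (a + 1) y)
    · rintro (rfl | ⟨-, hcon, -⟩)
      · exact Or.inr (Or.inl rfl)
      · omega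
  · simp only [Finset.mem_insert, Finset.notMem_empty, or_false, Finset.mem_singleton]
    constructor
    · rintro (h | h)
      · exact absurd h.symm (P_ne_Q T a y)
      · exact Or.inl (Q_inj T hbl2 hy h.symm)
    · rintro (rfl | ⟨-, hcon, -⟩)
      · exact Or.inr rfl
      · omega
  · simp only [Finset.mem_insert, Finset.mem_singleton]
    have hlt : e < nm T (a, b) := lt_of_le_of_ne hee h1
    constructor
    · rintro (h | h | h)
      · exact absurd h.symm (P_ne_Q T a y)
      · exact Or.inl (Q_inj T hbl2 hy h.symm)
      · exact absurd h.symm (midAt_ne_Q T hlt y)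
    · rintro (rfl | ⟨hcon, -⟩)
      · exact Or.inr (Or.inl rfl)
      · omega

lemma charM {m : W} {a b e : ℕ} (hm : m ∈ T.M) (hv : Valid T a b e) :
    m ∈ bag0 T a b e ↔ (e < nm T (a, b) ∧ midAt T (a, b) e = m) := by
  obtain ⟨ha, hbl, hbh, hee⟩ := hv
  have hnp : ∀ c, m ≠ P T c := by
    intro c; unfold P; split <;> exact T.M_ne_p hm _
  have hnq : ∀ c, m ≠ Q T c := by
    intro c; unfold Q; split <;> exact T.M_ne_q hm _
  rw [bag0]
  split_ifs with h1 h2 h3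
  · simp only [Finset.mem_insert, Finset.mem_singleton]
    constructor
    · rintro (h | h | h)
      · exact absurd h (hnp a)
      · exact absurd h (hnq b)
      · exact absurd h (hnq (b + 1))
    · rintro ⟨hcon, -⟩; omega
  · simp only [Finset.mem_insert, Finset.mem_singleton]
    constructor
    · rintro (h | h | h)
      · exact absurd h (hnp a)
      · exact absurd h (hnq b)
      · exact absurd h (hnp (a + 1))
    · rintro ⟨hcon, -⟩; omega
  · simp only [Finset.mem_insert, Finset.notMem_empty, or_false, Finset.mem_singleton]
    constructor
    · rintro (h | h)
      · exact absurd h (hnp a)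
      · exact absurd h (hnq b)
    · rintro ⟨hcon, -⟩; omega
  · simp only [Finset.mem_insert, Finset.mem_singleton]
    have hlt : e < nm T (a, b) := lt_of_le_of_ne hee h1
    constructor
    · rintro (h | h | h)
      · exact absurd h (hnp a)
      · exact absurd h (hnq b)
      · exact ⟨hlt, h.symm⟩
    · rintro ⟨-, h⟩
      exact Or.inr (Or.inr h.symm)

end TrackPW

namespace TrackPW

open scoped Classical

variable {W : Type u} {H : SimpleGraph W} (T : TrackRep H)

lemma nm_lt_BE (c : ℕ × ℕ) : nm T c < BE T :=
  lt_of_le_of_lt (nm_le_NM T c) (Nat.lt_succ_self _)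

lemma intervalP_state {x a b e : ℕ} (hx : x < T.k) (hv : Valid T a b e) :
    (a = x ∨ (e = nm T (a, b) ∧ hi T a ≤ b ∧ a + 1 < T.k ∧ a + 1 = x)) ↔
      ((if x = 0 then 0 else enc T (x - 1) (hi T (x - 1)) (nm T (x - 1, hi T (x - 1))))
          ≤ enc T a b e ∧
        enc T a b e ≤ enc T x (hi T x) (nm T (x, hi T x))) := by
  obtain ⟨haK, hlo, hhi, hnm⟩ := hv
  have hbl : b < T.l := lt_of_le_of_lt hhi (hi_lt_l T a)
  have heB : e < BE T := lt_of_le_of_lt (le_trans hnm (nm_le_NM T _)) (Nat.lt_succ_self _)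
  have hhx : hi T x < T.l := hi_lt_l T x
  have hnmx : nm T (x, hi T x) < BE T := nm_lt_BE T _
  constructor
  · rintro (rfl | ⟨he1, hb1, hK1, hx1⟩)
    · constructor
      · split_ifs with h0
        · exact Nat.zero_le _
        · rw [enc_le_iff T (hi_lt_l T _) hbl (nm_lt_BE T _) heB]
          exact Or.inl (by omega)
      · rw [enc_le_iff T hbl hhx heB hnmx]
        rcases lt_or_eq_of_le hhi with h | h
        · exact Or.inr (Or.inl ⟨rfl, h⟩)
        · right; right
          refine ⟨rfl, h, ?_⟩
          rw [← h]
          exact hnm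
    · have hbe : b = hi T a := le_antisymm hhi hb1
      have hx0 : x ≠ 0 := by omega
      rw [if_neg hx0]
      have hxa : x - 1 = a := by omega
      constructor
      · rw [hxa, ← hbe, ← he1]
      · rw [enc_le_iff T hbl hhx heB hnmx]
        exact Or.inl (by omega)
  · rintro ⟨hs, ht⟩
    rw [enc_le_iff T hbl hhx heB hnmx] at ht
    have hax : a ≤ x := by rcases ht with h | ⟨h, -⟩ | ⟨h, -⟩ <;> omega
    rcases eq_or_lt_of_le hax with rfl | haltx
    · exact Or.inl rfl
    by_cases hx0 : x = 0
    · omega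
    rw [if_neg hx0, enc_le_iff T (hi_lt_l T _) hbl (nm_lt_BE T _) heB] at hs
    rcases hs with h | ⟨hax2, h⟩ | ⟨hax2, hbh, hne⟩
    · omega
    · rw [hax2] at h
      omega
    · right
      rw [hax2] at hbh hne
      rw [hbh] at hne
      exact ⟨by omega, by omega, by omega, by omega⟩

end TrackPW

namespace TrackPW

open scoped Classical

variable {W : Type u} {H : SimpleGraph W} (T : TrackRep H)

lemma intervalQ {y : ℕ} (hy : y < T.l) :
    ∃ s t : ℕ, ∀ a b e : ℕ, Valid T a b e →
      ((b = y ∨ (e = nm T (a, b) ∧ b < hi T a ∧ b + 1 = y)) ↔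
        (s ≤ enc T a b e ∧ enc T a b e ≤ t)) := by
  have hex : ∃ a, y ≤ hi T a := ⟨T.k - 1, by rw [hi_last]; omega⟩
  set a1 := Nat.find hex with ha1
  have f1 : y ≤ hi T a1 := Nat.find_spec hex
  have f2 : ∀ a, a < a1 → hi T a < y := fun a h => by
    have := Nat.find_min hex h; omega
  have f3 : a1 ≤ T.k - 1 := Nat.find_min' hex (by rw [hi_last]; omega)
  have f4 : lo T a1 ≤ y := by
    rcases Nat.eq_zero_or_pos a1 with h | h
    · rw [h, lo_zero]; exact Nat.zero_le _
    · have h1 : a1 = (a1 - 1) + 1 := by omega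
      have h2 : lo T a1 = hi T (a1 - 1) := by conv_lhs => rw [h1, lo_succ]
      have h3 := f2 (a1 - 1) (by omega)
      omega
  set a2 := Nat.findGreatest (fun a => lo T a ≤ y) (T.k - 1) with ha2
  have f5 : lo T a2 ≤ y :=
    Nat.findGreatest_spec (P := fun a => lo T a ≤ y) (m := 0) (Nat.zero_le _)
      (by show lo T 0 ≤ y; rw [lo_zero]; exact Nat.zero_le _)
  have f7 : a1 ≤ a2 := Nat.le_findGreatest f3 f4
  have f8 : a2 ≤ T.k - 1 := Nat.findGreatest_le _
  have key1 : ∀ a', a1 < a' → y ≤ lo T a' := fun a' h => by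
    have h1 : a' = (a' - 1) + 1 := by omega
    have h2 : hi T a1 ≤ hi T (a' - 1) := hi_mono T (by omega)
    rw [h1, lo_succ]
    omega
  have key2 : ∀ a', a' < a2 → hi T a' ≤ y := fun a' h => by
    have h1 : lo T (a' + 1) ≤ lo T a2 := lo_mono T (by omega)
    rw [lo_succ] at h1
    omega
  refine ⟨if y = 0 then 0 else enc T a1 (y - 1) (nm T (a1, y - 1)),
    enc T a2 y (nm T (a2, y)), ?_⟩
  intro a b e hv
  obtain ⟨haK, hlo, hhi, hnm⟩ := hv
  have hbl : b < T.l := lt_of_le_of_lt hhi (hi_lt_l T a)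
  have heB : e < BE T := lt_of_le_of_lt (le_trans hnm (nm_le_NM T _)) (Nat.lt_succ_self _)
  have hyB : nm T (a2, y) < BE T := nm_lt_BE T _
  constructor
  · rintro (hby | ⟨he1, hb1, hb2⟩)
    · have haa1 : a1 ≤ a := Nat.find_min' hex (by omega)
      have haa2 : a ≤ a2 := Nat.le_findGreatest (by omega) (by omega)
      constructor
      · split_ifs with h0
        · exact Nat.zero_le _
        · rw [enc_le_iff T (by omega) hbl (nm_lt_BE T _) heB]
          rcases eq_or_lt_of_le haa1 with he2 | hlt
          · exact Or.inr (Or.inl ⟨he2, by omega⟩)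
          · exact Or.inl hlt
      · rw [enc_le_iff T hbl hy heB hyB]
        rcases eq_or_lt_of_le haa2 with he2 | hlt
        · right; right
          refine ⟨he2, by omega, ?_⟩
          rw [← he2, ← hby]
          exact hnm
        · exact Or.inl hlt
    · have hy0 : y ≠ 0 := by omega
      have haa1 : a1 ≤ a := Nat.find_min' hex (by omega)
      have haa2 : a ≤ a2 := Nat.le_findGreatest (by omega) (by omega)
      constructor
      · rw [if_neg hy0, enc_le_iff T (by omega) hbl (nm_lt_BE T _) heB]
        rcases eq_or_lt_of_le haa1 with he2 | hlt
        · right; right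
          refine ⟨he2, by omega, ?_⟩
          rw [he2, show y - 1 = b by omega, ← he1]
        · exact Or.inl hlt
      · rw [enc_le_iff T hbl hy heB hyB]
        rcases eq_or_lt_of_le haa2 with he2 | hlt
        · exact Or.inr (Or.inl ⟨he2, by omega⟩)
        · exact Or.inl hlt
  · rintro ⟨hs, ht⟩
    rw [enc_le_iff T hbl hy heB hyB] at ht
    have haa2 : a ≤ a2 := by
      rcases ht with h | ⟨h, -⟩ | ⟨h, -, -⟩ <;> omega
    have hbley : b ≤ y := by
      rcases ht with h | ⟨h1, h2⟩ | ⟨h1, h2, h3⟩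
      · exact le_trans hhi (key2 a h)
      · omega
      · omega
    by_cases hy0 : y = 0
    · exact Or.inl (by omega)
    rw [if_neg hy0, enc_le_iff T (by omega) hbl (nm_lt_BE T _) heB] at hs
    have haa1 : a1 ≤ a := by
      rcases hs with h | ⟨h, -⟩ | ⟨h, -, -⟩ <;> omega
    rcases eq_or_lt_of_le haa1 with heq | hlt2
    · rcases hs with h | ⟨h1, h2⟩ | ⟨h1, h2, h3⟩
      · exfalso; omega
      · exact Or.inl (by omega)
      · right
        rw [h1, h2] at h3
        have hyhi : y ≤ hi T a := by rw [← heq]; exact f1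
        exact ⟨by omega, by omega, by omega⟩
    · have := key1 a hlt2
      exact Or.inl (by omega)

end TrackPW

namespace TrackPW

open scoped Classical

variable {W : Type u} {H : SimpleGraph W} (T : TrackRep H)

lemma ends_mem_Cf {m : W} (hm : m ∈ T.M) :
    (((T.ends m).1 : ℕ), ((T.ends m).2 : ℕ)) ∈ Cf T :=
  (mem_Cf T).mpr ⟨T.ends m, Or.inr ⟨m, hm, rfl⟩, rfl⟩

lemma intervalM {m : W} (hm : m ∈ T.M) :
    ∃ s t : ℕ, ∀ a b e : ℕ, Valid T a b e →
      ((e < nm T (a, b) ∧ midAt T (a, b) e = m) ↔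
        (s ≤ enc T a b e ∧ enc T a b e ≤ t)) := by
  have hmem : m ∈ mids T (((T.ends m).1 : ℕ), ((T.ends m).2 : ℕ)) :=
    (mem_mids T).mpr ⟨hm, rfl, rfl⟩
  obtain ⟨e0, he0, hge⟩ := List.mem_iff_getElem.mp hmem
  have hrange := chord_range T (ends_mem_Cf T hm)
  have hval : Valid T ((T.ends m).1 : ℕ) ((T.ends m).2 : ℕ) e0 :=
    ⟨(T.ends m).1.isLt, hrange.1, hrange.2, le_of_lt he0⟩
  refine ⟨enc T ((T.ends m).1 : ℕ) ((T.ends m).2 : ℕ) e0,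
    enc T ((T.ends m).1 : ℕ) ((T.ends m).2 : ℕ) e0, ?_⟩
  intro a b e hv
  constructor
  · rintro ⟨hlt, hmid⟩
    have hm2 : m ∈ mids T (a, b) := hmid ▸ midAt_mem T hlt
    obtain ⟨-, hi1, hi2⟩ := (mem_mids T).mp hm2
    have ha : a = ((T.ends m).1 : ℕ) := hi1.symm
    have hb : b = ((T.ends m).2 : ℕ) := hi2.symm
    subst ha hb
    have heq : e = e0 := by
      apply (List.Nodup.getElem_inj_iff (mids_nodup T _)).mp
      rw [hge]
      rw [midAt, List.getD_eq_getElem _ _ hlt] at hmid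
      exact hmid
    subst heq
    exact ⟨le_refl _, le_refl _⟩
  · rintro ⟨h1, h2⟩
    have hEq : enc T a b e = enc T ((T.ends m).1 : ℕ) ((T.ends m).2 : ℕ) e0 :=
      le_antisymm h2 h1
    have c1 := cs_enc T hv
    have c2 := cs_enc T hval
    rw [hEq] at c1
    have ha : a = ((T.ends m).1 : ℕ) := by rw [← c1.1, c2.1]
    have hb : b = ((T.ends m).2 : ℕ) := by rw [← c1.2.1, c2.2.1]
    have he : e = e0 := by rw [← c1.2.2, c2.2.2]
    subst ha hb he
    constructor
    · exact he0
    · rw [midAt, List.getD_eq_getElem _ _ he0]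
      exact hge

lemma exists_interval (v : W) :
    ∃ s t : ℕ, ∀ τ, τ < nIdx T → (v ∈ Bag T τ ↔ s ≤ F T τ ∧ F T τ ≤ t) := by
  rcases T.vert_cover v with ⟨i, rfl⟩ | ⟨j, rfl⟩ | hm
  · refine ⟨if (i : ℕ) = 0 then 0
      else enc T ((i : ℕ) - 1) (hi T ((i : ℕ) - 1)) (nm T ((i : ℕ) - 1, hi T ((i : ℕ) - 1))),
      enc T (i : ℕ) (hi T (i : ℕ)) (nm T ((i : ℕ), hi T (i : ℕ))), ?_⟩
    intro τ hτ
    have hv := cs_valid T hτ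
    have h1 := charP T (x := (i : ℕ)) i.isLt hv
    rw [P_eq_p T i] at h1
    exact h1.trans (intervalP_state T i.isLt hv)
  · obtain ⟨s, t, hst⟩ := intervalQ T (y := (j : ℕ)) j.isLt
    refine ⟨s, t, ?_⟩
    intro τ hτ
    have hv := cs_valid T hτ
    have h1 := charQ T (y := (j : ℕ)) j.isLt hv
    rw [Q_eq_q T j] at h1
    exact h1.trans (hst _ _ _ hv)
  · obtain ⟨s, t, hst⟩ := intervalM T hm
    refine ⟨s, t, ?_⟩
    intro τ hτ
    have hv := cs_valid T hτ
    exact (charM T hm hv).trans (hst _ _ _ hv)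

lemma col_exists' {y : ℕ} (hy : y < T.l) :
    ∃ a, a < T.k ∧ lo T a ≤ y ∧ y ≤ hi T a ∧ (0 < y → lo T a ≤ y - 1) := by
  have hex : ∃ a, y ≤ hi T a := ⟨T.k - 1, by rw [hi_last]; omega⟩
  set a1 := Nat.find hex with ha1
  have f1 : y ≤ hi T a1 := Nat.find_spec hex
  have f3 : a1 ≤ T.k - 1 := Nat.find_min' hex (by rw [hi_last]; omega)
  have f4 : lo T a1 ≤ y ∧ (0 < y → lo T a1 ≤ y - 1) := by
    rcases Nat.eq_zero_or_pos a1 with h | h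
    · rw [h, lo_zero]; omega
    · have h1 : a1 = (a1 - 1) + 1 := by omega
      have h2 : lo T a1 = hi T (a1 - 1) := by conv_lhs => rw [h1, lo_succ]
      have h3 : hi T (a1 - 1) < y := by
        have := Nat.find_min hex (show a1 - 1 < a1 by omega)
        omega
      omega
  exact ⟨a1, by have := T.kpos; omega, f4.1, f1, f4.2⟩

lemma bag_cover (v : W) : ∃ τ, τ < nIdx T ∧ v ∈ Bag T τ := by
  have cover : ∀ a b e, Valid T a b e → v ∈ bag0 T a b e →
      ∃ τ, τ < nIdx T ∧ v ∈ Bag T τ := by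
    intro a b e hv hmem
    refine ⟨enc T a b e, enc_lt_nIdx T hv.1 (valid_b_lt T hv) (valid_e_lt T hv), ?_⟩
    obtain ⟨c1, c2, c3⟩ := cs_enc T hv
    rw [Bag, c1, c2, c3]
    exact hmem
  rcases T.vert_cover v with ⟨i, rfl⟩ | ⟨j, rfl⟩ | hm
  · have hv : Valid T (i : ℕ) (lo T (i : ℕ)) 0 :=
      ⟨i.isLt, le_refl _, lo_le_hi T _, Nat.zero_le _⟩
    refine cover _ _ _ hv ?_
    rw [← P_eq_p T i, charP T i.isLt hv]
    exact Or.inl rfl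
  · obtain ⟨a, haK, h1, h2, -⟩ := col_exists' T j.isLt
    have hv : Valid T a (j : ℕ) 0 := ⟨haK, h1, h2, Nat.zero_le _⟩
    refine cover _ _ _ hv ?_
    rw [← Q_eq_q T j, charQ T j.isLt hv]
    exact Or.inl rfl
  · have hmem : v ∈ mids T (((T.ends v).1 : ℕ), ((T.ends v).2 : ℕ)) :=
      (mem_mids T).mpr ⟨hm, rfl, rfl⟩
    obtain ⟨e0, he0, hge⟩ := List.mem_iff_getElem.mp hmem
    have hrange := chord_range T (ends_mem_Cf T hm)
    have hv : Valid T ((T.ends v).1 : ℕ) ((T.ends v).2 : ℕ) e0 :=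
      ⟨(T.ends v).1.isLt, hrange.1, hrange.2, le_of_lt he0⟩
    refine cover _ _ _ hv ?_
    rw [charM T hm hv]
    refine ⟨he0, ?_⟩
    rw [midAt, List.getD_eq_getElem _ _ he0]
    exact hge

end TrackPW

namespace TrackPW

open scoped Classical

variable {W : Type u} {H : SimpleGraph W} (T : TrackRep H)

lemma bag_at_valid {a b e : ℕ} (hv : Valid T a b e) :
    Bag T (enc T a b e) = bag0 T a b e := by
  obtain ⟨c1, c2, c3⟩ := cs_enc T hv
  rw [Bag, c1, c2, c3]

lemma pair_cover {u w : W} {a b e : ℕ} (hv : Valid T a b e)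
    (h1 : u ∈ bag0 T a b e) (h2 : w ∈ bag0 T a b e) :
    ∃ τ, τ < nIdx T ∧ u ∈ Bag T τ ∧ w ∈ Bag T τ := by
  refine ⟨enc T a b e, enc_lt_nIdx T hv.1 (valid_b_lt T hv) (valid_e_lt T hv), ?_, ?_⟩ <;>
    rw [bag_at_valid T hv]
  exacts [h1, h2]

lemma edge_cover {u w : W} (h : H.Adj u w) :
    ∃ τ, τ < nIdx T ∧ u ∈ Bag T τ ∧ w ∈ Bag T τ := by
  have cover : ∀ (u' w' : W) (a b e : ℕ), Valid T a b e → u' ∈ bag0 T a b e →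
      w' ∈ bag0 T a b e → ∃ τ, τ < nIdx T ∧ u' ∈ Bag T τ ∧ w' ∈ Bag T τ :=
    fun u' w' a b e hv h1 h2 => pair_cover T hv h1 h2
  rcases (T.adj_iff u w).mp h with ⟨i, j, hij, hu, hw⟩ | ⟨i, j, hij, hu, hw⟩ |
    ⟨c, hc, hcase⟩ | ⟨m, hm, hcase⟩
  · -- p-edge
    subst hu hw
    have main : ∀ x y : Fin T.k, (x : ℕ) + 1 = (y : ℕ) →
        ∃ τ, τ < nIdx T ∧ T.p x ∈ Bag T τ ∧ T.p y ∈ Bag T τ := by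
      intro x y hxy
      have hv : Valid T (x : ℕ) (hi T (x : ℕ)) (nm T ((x : ℕ), hi T (x : ℕ))) :=
        ⟨x.isLt, lo_le_hi T _, le_refl _, le_refl _⟩
      have h1 : T.p x ∈ bag0 T (x : ℕ) (hi T (x : ℕ)) (nm T ((x : ℕ), hi T (x : ℕ))) := by
        rw [← P_eq_p T x, charP T x.isLt hv]
        exact Or.inl rfl
      have h2 : T.p y ∈ bag0 T (x : ℕ) (hi T (x : ℕ)) (nm T ((x : ℕ), hi T (x : ℕ))) := by
        rw [← P_eq_p T y, charP T y.isLt hv]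
        exact Or.inr ⟨rfl, le_refl _, by omega, hxy⟩
      exact cover _ _ _ _ _ hv h1 h2
    rcases hij with h1 | h1
    · exact main i j h1
    · obtain ⟨τ, hτ, hh1, hh2⟩ := main j i h1
      exact ⟨τ, hτ, hh2, hh1⟩
  · -- q-edge
    subst hu hw
    have main : ∀ x y : Fin T.l, (x : ℕ) + 1 = (y : ℕ) →
        ∃ τ, τ < nIdx T ∧ T.q x ∈ Bag T τ ∧ T.q y ∈ Bag T τ := by
      intro x y hxy
      obtain ⟨a, haK, hl1, hl2, hl3⟩ := col_exists' T y.isLt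
      have hl4 : lo T a ≤ (x : ℕ) := by
        have := hl3 (by omega)
        omega
      have hv : Valid T a (x : ℕ) (nm T (a, (x : ℕ))) :=
        ⟨haK, hl4, by omega, le_refl _⟩
      have h1 : T.q x ∈ bag0 T a (x : ℕ) (nm T (a, (x : ℕ))) := by
        rw [← Q_eq_q T x, charQ T x.isLt hv]
        exact Or.inl rfl
      have h2 : T.q y ∈ bag0 T a (x : ℕ) (nm T (a, (x : ℕ))) := by
        rw [← Q_eq_q T y, charQ T y.isLt hv]
        exact Or.inr ⟨rfl, by omega, hxy⟩
      exact cover _ _ _ _ _ hv h1 h2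
    rcases hij with h1 | h1
    · exact main i j h1
    · obtain ⟨τ, hτ, hh1, hh2⟩ := main j i h1
      exact ⟨τ, hτ, hh2, hh1⟩
  · -- short chord
    have hCf : ((c.1 : ℕ), (c.2 : ℕ)) ∈ Cf T := (mem_Cf T).mpr ⟨c, Or.inl hc, rfl⟩
    have hrange := chord_range T hCf
    have hv : Valid T (c.1 : ℕ) (c.2 : ℕ) (nm T ((c.1 : ℕ), (c.2 : ℕ))) :=
      ⟨c.1.isLt, hrange.1, hrange.2, le_refl _⟩
    have h1 : T.p c.1 ∈ bag0 T (c.1 : ℕ) (c.2 : ℕ) (nm T ((c.1 : ℕ), (c.2 : ℕ))) := by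
      rw [← P_eq_p T c.1, charP T c.1.isLt hv]
      exact Or.inl rfl
    have h2 : T.q c.2 ∈ bag0 T (c.1 : ℕ) (c.2 : ℕ) (nm T ((c.1 : ℕ), (c.2 : ℕ))) := by
      rw [← Q_eq_q T c.2, charQ T c.2.isLt hv]
      exact Or.inl rfl
    rcases hcase with ⟨rfl, rfl⟩ | ⟨rfl, rfl⟩
    · exact cover _ _ _ _ _ hv h1 h2
    · exact cover _ _ _ _ _ hv h2 h1
  · -- long chord
    have hmem : m ∈ mids T (((T.ends m).1 : ℕ), ((T.ends m).2 : ℕ)) :=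
      (mem_mids T).mpr ⟨hm, rfl, rfl⟩
    obtain ⟨e0, he0, hge⟩ := List.mem_iff_getElem.mp hmem
    have hrange := chord_range T (ends_mem_Cf T hm)
    have hv : Valid T ((T.ends m).1 : ℕ) ((T.ends m).2 : ℕ) e0 :=
      ⟨(T.ends m).1.isLt, hrange.1, hrange.2, le_of_lt he0⟩
    have h1 : m ∈ bag0 T ((T.ends m).1 : ℕ) ((T.ends m).2 : ℕ) e0 := by
      rw [charM T hm hv]
      refine ⟨he0, ?_⟩
      rw [midAt, List.getD_eq_getElem _ _ he0]
      exact hge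
    have h2 : T.p (T.ends m).1 ∈ bag0 T ((T.ends m).1 : ℕ) ((T.ends m).2 : ℕ) e0 := by
      rw [← P_eq_p T (T.ends m).1, charP T (T.ends m).1.isLt hv]
      exact Or.inl rfl
    have h3 : T.q (T.ends m).2 ∈ bag0 T ((T.ends m).1 : ℕ) ((T.ends m).2 : ℕ) e0 := by
      rw [← Q_eq_q T (T.ends m).2, charQ T (T.ends m).2.isLt hv]
      exact Or.inl rfl
    rcases hcase with ⟨rfl, (rfl | rfl)⟩ | ⟨rfl, (rfl | rfl)⟩
    · exact cover _ _ _ _ _ hv h1 h2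
    · exact cover _ _ _ _ _ hv h1 h3
    · exact cover _ _ _ _ _ hv h2 h1
    · exact cover _ _ _ _ _ hv h3 h1

lemma bag_card (τ : ℕ) : (Bag T τ).card ≤ 3 := bag0_card T _ _ _

/-- Path decomposition of a track, with all bags of size at most 3. -/
noncomputable def trackDecomp : PathDecomp H where
  n := nIdx T
  bag i := Bag T i
  mem_bag v := by
    obtain ⟨τ, hτ, hmem⟩ := bag_cover T v
    exact ⟨⟨τ, hτ⟩, hmem⟩
  edge_bag u w h := by
    obtain ⟨τ, hτ, h1, h2⟩ := edge_cover T h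
    exact ⟨⟨τ, hτ⟩, h1, h2⟩
  interp i j k hij hjk v hvi hvk := by
    obtain ⟨s, t, hst⟩ := exists_interval T v
    have h1 := (hst i i.isLt).mp hvi
    have h2 := (hst k k.isLt).mp hvk
    refine (hst j j.isLt).mpr ⟨le_trans h1.1 (F_mono T hij), le_trans (F_mono T hjk) h2.2⟩

end TrackPW


noncomputable def PathDecomp.pullback {V : Type u} {X : Type v} [Fintype V]
    (G : SimpleGraph V) {H : SimpleGraph X} (D : PathDecomp H) (f : V → X)
    (hadj : ∀ ⦃a b : V⦄, G.Adj a b → H.Adj (f a) (f b)) : PathDecomp G where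
  n := D.n
  bag i := Finset.univ.filter (fun v => f v ∈ D.bag i)
  mem_bag v := by
    obtain ⟨i, hi⟩ := D.mem_bag (f v)
    exact ⟨i, by simp [hi]⟩
  edge_bag u w huw := by
    obtain ⟨i, h1, h2⟩ := D.edge_bag (hadj huw)
    exact ⟨i, by simp [h1], by simp [h2]⟩
  interp i j k hij hjk v hvi hvk := by
    simp only [Finset.mem_filter, Finset.mem_univ, true_and] at hvi hvk ⊢
    exact D.interp i j k hij hjk (f v) hvi hvk

lemma PathDecomp.pullback_card {V : Type u} {X : Type v} [Fintype V]
    (G : SimpleGraph V) {H : SimpleGraph X} (D : PathDecomp H) (f : V → X)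
    (hadj : ∀ ⦃a b : V⦄, G.Adj a b → H.Adj (f a) (f b)) (hinj : Function.Injective f)
    (i : Fin D.n) : ((PathDecomp.pullback G D f hadj).bag i).card ≤ (D.bag i).card := by
  apply Finset.card_le_card_of_injOn f
  · intro v hv
    simp only [PathDecomp.pullback, Finset.mem_filter, Finset.mem_univ, true_and] at hv
    simpa using hv
  · exact fun a _ b _ hh => hinj hh


end TrackAux

/-- Every partial track has path-width at most 2. -/
theorem pathWidth_le_two_of_isPartialTrack {V : Type u} [Fintype V] (G : SimpleGraph V)
    (h : IsPartialTrack G) : pathWidth G ≤ 2 := by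
  classical
  obtain ⟨X, Tg, f, ⟨T⟩, finj, fadj⟩ := h
  let D := TrackPW.trackDecomp T
  let D' : PathDecomp G := PathDecomp.pullback G D f fadj
  have hw : D'.width ≤ 2 := by
    rw [PathDecomp.width]
    have hsup : (Finset.univ.sup fun i => ((D'.bag i)).card) ≤ 3 := by
      apply Finset.sup_le
      intro i _
      have hc : (D'.bag i).card ≤ (D.bag i).card :=
        PathDecomp.pullback_card G D f fadj finj i
      have hc2 : (D.bag i).card ≤ 3 := TrackPW.bag_card T i
      omega
    omega
  calc pathWidth G ≤ D'.width := Nat.sInf_le ⟨D', rfl⟩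
    _ ≤ 2 := hw
end

section
/- If G is a 2-edge-connected finite simple graph with path-width at most 2, then every block of G contains at most two cut vertices of G. -/
open SimpleGraph

universe u v

section Helpers

variable {V : Type u} {G : SimpleGraph V}

/-- Walk in `G` avoiding vertex `v`. -/
def AReach (G : SimpleGraph V) (v x y : V) : Prop := ∃ W : G.Walk x y, v ∉ W.support

lemma AReach.ne_left {v x y : V} (h : AReach G v x y) : x ≠ v := by
  obtain ⟨W, hW⟩ := h; rintro rfl; exact hW W.start_mem_support

lemma AReach.ne_right {v x y : V} (h : AReach G v x y) : y ≠ v := by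
  obtain ⟨W, hW⟩ := h; rintro rfl; exact hW W.end_mem_support

lemma AReach.refl {v x : V} (h : x ≠ v) : AReach G v x x :=
  ⟨Walk.nil, by simp [h.symm]⟩

lemma AReach.symm {v x y : V} (h : AReach G v x y) : AReach G v y x := by
  obtain ⟨W, hW⟩ := h; exact ⟨W.reverse, by simpa using hW⟩

lemma AReach.trans {v x y z : V} (h : AReach G v x y) (h' : AReach G v y z) :
    AReach G v x z := by
  obtain ⟨W, hW⟩ := h; obtain ⟨W', hW'⟩ := h'
  exact ⟨W.append W', by rw [Walk.mem_support_append_iff]; tauto⟩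

lemma AReach.of_adj {v x y : V} (h : G.Adj x y) (hx : x ≠ v) (hy : y ≠ v) :
    AReach G v x y :=
  ⟨Walk.cons h Walk.nil, by simp [Ne.symm hx, Ne.symm hy]⟩

lemma AReach.induce_reachable {v x y : V} (h : AReach G v x y) :
    (G.induce ({v}ᶜ : Set V)).Reachable ⟨x, h.ne_left⟩ ⟨y, h.ne_right⟩ := by
  obtain ⟨W, hW⟩ := h
  induction W with
  | nil => rfl
  | @cons a b c hab W ih =>
    have hb : b ≠ v := fun hbv => hW (by
      simp only [Walk.support_cons, List.mem_cons]
      exact Or.inr (hbv ▸ W.start_mem_support))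
    have ha : a ≠ v := fun hav => hW (by simp [hav, Walk.support_cons])
    have hW' : v ∉ W.support := fun hv => hW (by simp [Walk.support_cons, hv])
    exact (Reachable.trans
      ⟨Walk.cons (by exact hab : (G.induce ({v}ᶜ : Set V)).Adj ⟨a, ha⟩ ⟨b, hb⟩) Walk.nil⟩
      (ih hW'))

/-- The set of vertices separated from `w` by removing `v`. -/
def CutComp (G : SimpleGraph V) (v w : V) : Set V := {x | x ≠ v ∧ ¬ AReach G v x w}

lemma cutComp_ne {v w x : V} (h : x ∈ CutComp G v w) : x ≠ v := h.1

lemma not_mem_cutComp_self {v w : V} (hw : w ≠ v) : w ∉ CutComp G v w :=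
  fun h => h.2 (AReach.refl hw)

lemma v_not_mem_cutComp {v w : V} : v ∉ CutComp G v w := fun h => h.1 rfl

/-- Absorption: walks avoiding `v` starting in the component stay in it. -/
lemma mem_cutComp_of_walk {v w x z : V} (hx : x ∈ CutComp G v w)
    (W : G.Walk x z) (hW : v ∉ W.support) : z ∈ CutComp G v w := by
  induction W with
  | nil => exact hx
  | @cons a b c hab W ih =>
    have hb : b ≠ v := fun hbv => hW (by
      simp only [Walk.support_cons, List.mem_cons]
      exact Or.inr (hbv ▸ W.start_mem_support))
    have ha : a ≠ v := fun hav => hW (by simp [hav, Walk.support_cons])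
    have hW' : v ∉ W.support := fun hv => hW (by simp [Walk.support_cons, hv])
    refine ih ⟨hb, fun hr => hx.2 ?_⟩ hW'
    exact (AReach.of_adj hab ha hb).trans hr

lemma mem_cutComp_of_areach {v w x z : V} (hx : x ∈ CutComp G v w)
    (h : AReach G v x z) : z ∈ CutComp G v w := by
  obtain ⟨W, hW⟩ := h; exact mem_cutComp_of_walk hx W hW

lemma cutComp_nonempty {v w : V} (hv : IsCutVertex G v) (hw : w ≠ v) :
    ∃ x, x ∈ CutComp G v w := by
  obtain ⟨-, hnc⟩ := hv
  have hne : Nonempty ({v}ᶜ : Set V) := ⟨⟨w, hw⟩⟩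
  have hpre : ¬ (G.induce ({v}ᶜ : Set V)).Preconnected := fun hp => hnc ((connected_iff _).mpr ⟨hp, hne⟩)
  rw [SimpleGraph.Preconnected] at hpre
  push_neg at hpre
  obtain ⟨a, b, hab⟩ := hpre
  by_cases ha : AReach G v a.val w
  · refine ⟨b.val, b.prop, fun hb => ?_⟩
    exact hab (ha.trans hb.symm).induce_reachable
  · exact ⟨a.val, a.prop, ha⟩

private lemma cutComp_walk_aux {v w x y : V} (W : G.Walk x y) :
    ∀ _ : y = v, ∀ _ : x ∈ CutComp G v w,
    ∃ W' : G.Walk x v, ∀ z ∈ W'.support, z ∈ CutComp G v w ∨ z = v := by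
  induction W with
  | nil =>
    rintro rfl hx; exact absurd rfl (cutComp_ne hx)
  | @cons a b c hab W ih =>
    rintro rfl hx
    by_cases hb : b = c
    · subst hb
      refine ⟨Walk.cons hab Walk.nil, ?_⟩
      intro z hz
      simp only [Walk.support_cons, Walk.support_nil, List.mem_cons,
        List.mem_singleton, List.not_mem_nil, or_false] at hz
      rcases hz with rfl | rfl
      · exact Or.inl hx
      · exact Or.inr rfl
    · have hbC : b ∈ CutComp G c w :=
        mem_cutComp_of_areach hx (AReach.of_adj hab (cutComp_ne hx) hb)
      obtain ⟨W', hW'⟩ := ih rfl hbC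
      refine ⟨Walk.cons hab W', ?_⟩
      intro z hz
      simp only [Walk.support_cons, List.mem_cons] at hz
      rcases hz with rfl | h
      · exact Or.inl hx
      · exact hW' z h

lemma cutComp_exists_walk_to_cut {v w x : V} (hconn : G.Connected)
    (hx : x ∈ CutComp G v w) :
    ∃ W : G.Walk x v, ∀ z ∈ W.support, z ∈ CutComp G v w ∨ z = v := by
  obtain ⟨W⟩ := hconn.preconnected x v
  exact cutComp_walk_aux W rfl hx

private lemma cutComp_adj_aux {v w x y : V} (W : G.Walk x y) :
    ∀ _ : y = v, ∀ _ : x ∈ CutComp G v w, ∃ x' ∈ CutComp G v w, G.Adj v x' := by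
  induction W with
  | nil => rintro rfl hx; exact absurd rfl (cutComp_ne hx)
  | @cons a b c hab W ih =>
    rintro rfl hx
    by_cases hb : b = c
    · exact ⟨a, hx, hb ▸ hab.symm⟩
    · exact ih rfl (mem_cutComp_of_areach hx (AReach.of_adj hab (cutComp_ne hx) hb))

lemma cutComp_exists_adj {v w : V} (hconn : G.Connected) (hv : IsCutVertex G v)
    (hw : w ≠ v) : ∃ x ∈ CutComp G v w, G.Adj v x := by
  obtain ⟨x0, hx0⟩ := cutComp_nonempty (G := G) hv hw
  obtain ⟨W⟩ := hconn.preconnected x0 v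
  exact cutComp_adj_aux W rfl hx0

end Helpers

section Cycles

variable {V : Type u} {G : SimpleGraph V}

/-- For a non-nil closed walk, membership in the support equals membership in its tail. -/
lemma closed_mem_support_iff_tail {r y : V} {c : G.Walk r r} (hc : ¬ c.Nil) :
    y ∈ c.support ↔ y ∈ c.support.tail := by
  obtain ⟨u, h, q, rfl⟩ := Walk.not_nil_iff.mp hc
  simp only [Walk.support_cons, List.tail_cons, List.mem_cons]
  constructor
  · rintro (rfl | h)
    · exact q.end_mem_support
    · exact h
  · exact Or.inr

lemma mem_support_rotate_iff [DecidableEq V] {r x y : V} {c : G.Walk r r} (hc : c.IsCycle)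
    (hx : x ∈ c.support) : y ∈ (c.rotate x hx).support ↔ y ∈ c.support := by
  have h1 : ¬ c.Nil := hc.not_nil
  have h2 : ¬ (c.rotate x hx).Nil := (hc.rotate hx).not_nil
  rw [closed_mem_support_iff_tail h1, closed_mem_support_iff_tail h2]
  exact (Walk.support_rotate c x hx).mem_iff

/-- KEY1: in a cycle rooted at `r`, one can reach any support vertex from `r`
avoiding any given vertex `v ∉ {r, target}`, staying on the cycle. -/
lemma cycle_reach_avoiding [DecidableEq V] {r z v : V} {c : G.Walk r r} (hc : c.IsCycle)
    (hz : z ∈ c.support) (hvr : v ≠ r) (hvz : v ≠ z) :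
    ∃ W : G.Walk r z, v ∉ W.support ∧ ∀ t ∈ W.support, t ∈ c.support := by
  by_cases hv : v ∈ (c.takeUntil z hz).support
  · refine ⟨(c.dropUntil z hz).reverse, ?_, ?_⟩
    · rw [Walk.support_reverse, List.mem_reverse]
      intro hv2
      have hnd : c.support.tail.Nodup := hc.support_nodup
      have hspec : c.support = (c.takeUntil z hz).support ++ (c.dropUntil z hz).support.tail := by
        rw [← Walk.support_append, Walk.take_spec]
      have h1 : v ∈ (c.takeUntil z hz).support.tail := by
        have := (c.takeUntil z hz).support_eq_cons
        rw [this] at hv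
        rcases List.mem_cons.mp hv with rfl | h
        · exact absurd rfl hvr
        · exact h
      have h2 : v ∈ (c.dropUntil z hz).support.tail := by
        have := (c.dropUntil z hz).support_eq_cons
        rw [this] at hv2
        rcases List.mem_cons.mp hv2 with rfl | h
        · exact absurd rfl hvz
        · exact h
      have htl : c.support.tail
          = (c.takeUntil z hz).support.tail ++ (c.dropUntil z hz).support.tail := by
        rw [hspec, (c.takeUntil z hz).support_eq_cons]; rfl
      rw [htl] at hnd
      exact List.disjoint_of_nodup_append hnd h1 h2
    · intro t ht
      rw [Walk.support_reverse, List.mem_reverse] at ht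
      exact Walk.support_dropUntil_subset c hz ht
  · exact ⟨c.takeUntil z hz, hv, fun t ht => Walk.support_takeUntil_subset c hz ht⟩

/-- KEY2: every vertex of a cycle (rooted at it) has two distinct neighbors on the cycle. -/
lemma cycle_two_neighbors {v : V} {c : G.Walk v v} (hc : c.IsCycle) :
    ∃ u w, u ≠ w ∧ G.Adj v u ∧ G.Adj v w ∧ u ∈ c.support ∧ w ∈ c.support := by
  obtain ⟨u, h, q, rfl⟩ := Walk.not_nil_iff.mp hc.not_nil
  rw [Walk.cons_isCycle_iff] at hc
  obtain ⟨hq, he⟩ := hc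
  have hqlen : 0 < q.length := by
    by_contra h0
    push_neg at h0
    interval_cases hl : q.length
    · exact absurd (Walk.nil_iff_length_eq.mpr hl).eq h.ne'
  have hqr : ¬ q.reverse.Nil := by
    rw [Walk.not_nil_iff_lt_length, Walk.length_reverse]; exact hqlen
  obtain ⟨w, hw⟩ : ∃ w, q.reverse.getVert 1 = w := ⟨_, rfl⟩
  have hadj : G.Adj v w := hw ▸ q.reverse.adj_snd hqr
  -- note: hw : q.reverse.getVert 1 = w
  have hwmem : w ∈ q.support := by
    rw [← List.mem_reverse, ← Walk.support_reverse]
    rw [Walk.mem_support_iff_exists_getVert]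
    exact ⟨1, hw, by rw [Walk.length_reverse]; exact hqlen⟩
  have hedge : s(v, w) ∈ q.edges := by
    have : s(v, w) ∈ q.reverse.edges := by
      rw [← q.reverse.cons_tail_eq hqr, Walk.edges_cons]
      exact List.mem_cons.mpr (Or.inl (by subst hw; rfl))
    rwa [Walk.edges_reverse, List.mem_reverse] at this
  have hne : u ≠ w := by
    intro h'
    have hvv : s(v, u) = s(v, w) := by rw [h']
    exact he (by rw [hvv]; exact hedge)
  exact ⟨u, w, hne, h, hadj, by simp [Walk.support_cons, q.start_mem_support],
    by simp [Walk.support_cons, hwmem]⟩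

/-- There is a cycle through every edge of a 2-edge-connected graph. -/
lemma exists_cycle_through_edge (h2ec : TwoEdgeConnected G) {x y : V} (hxy : G.Adj x y) :
    ∃ (u : V) (c : G.Walk u u), c.IsCycle ∧ s(x, y) ∈ c.edges := by
  have hdel := h2ec.2.2 s(x, y) hxy
  have hreach : (G \ SimpleGraph.fromEdgeSet {s(x, y)}).Reachable x y :=
    hdel.preconnected x y
  exact (SimpleGraph.adj_and_reachable_delete_edges_iff_exists_cycle).mp ⟨hxy, hreach⟩

end Cycles

section Decomp

variable {V : Type u} {G : SimpleGraph V}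

lemma exists_small_decomp [Fintype V] (hpw : pathWidth G ≤ 2) :
    ∃ D : PathDecomp G, ∀ i, (D.bag i).card ≤ 3 := by
  classical
  have hne : {w | ∃ D : PathDecomp G, D.width = w}.Nonempty := by
    refine ⟨_, ⟨⟨1, fun _ => Finset.univ, fun v => ⟨0, Finset.mem_univ v⟩,
      fun u w _ => ⟨0, Finset.mem_univ u, Finset.mem_univ w⟩,
      fun _ _ _ _ _ v _ _ => Finset.mem_univ v⟩, rfl⟩⟩
  obtain ⟨D, hD⟩ := Nat.sInf_mem hne
  refine ⟨D, fun i => ?_⟩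
  have h1 : D.width ≤ 2 := by rw [hD]; exact hpw
  have h2 : (Finset.univ.sup fun i => (D.bag i).card) ≤ 3 := by
    have := tsub_le_iff_right.mp h1
    simpa [PathDecomp.width] using this
  exact le_trans (Finset.le_sup (f := fun i => (D.bag i).card) (Finset.mem_univ i)) h2

lemma exists_bag_in_cycle [Fintype V] (D : PathDecomp G)
    (hcard : ∀ i, (D.bag i).card ≤ 3) {r : V} {c : G.Walk r r} (hc : c.IsCycle) :
    ∃ t, (D.bag t).Nonempty ∧ ∀ x ∈ D.bag t, x ∈ c.support := by
  classical
  have hidx : ∀ v : V, (Finset.univ.filter (fun i => v ∈ D.bag i)).Nonempty := by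
    intro v
    obtain ⟨i, hi⟩ := D.mem_bag v
    exact ⟨i, Finset.mem_filter.mpr ⟨Finset.mem_univ i, hi⟩⟩
  set fst : V → Fin D.n := fun v => (Finset.univ.filter (fun i => v ∈ D.bag i)).min' (hidx v)
    with hfst
  have hmem_fst : ∀ v, v ∈ D.bag (fst v) := by
    intro v
    have := Finset.min'_mem _ (hidx v)
    exact (Finset.mem_filter.mp this).2
  have hfst_le : ∀ v i, v ∈ D.bag i → fst v ≤ i := by
    intro v i hi
    exact Finset.min'_le _ _ (Finset.mem_filter.mpr ⟨Finset.mem_univ i, hi⟩)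
  obtain ⟨v, hvS, hvmax⟩ := (c.support.toFinset).exists_max_image fst
    ⟨r, by simp [c.start_mem_support]⟩
  rw [List.mem_toFinset] at hvS
  obtain ⟨u, w, huw, hadju, hadjw, humem, hwmem⟩ :=
    cycle_two_neighbors (hc.rotate hvS)
  rw [mem_support_rotate_iff hc hvS] at humem hwmem
  have key : ∀ z, G.Adj v z → z ∈ c.support → z ∈ D.bag (fst v) := by
    intro z hadj hzc
    obtain ⟨j, hvj, hzj⟩ := D.edge_bag hadj
    have h1 : fst z ≤ fst v := hvmax z (List.mem_toFinset.mpr hzc)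
    have h2 : fst v ≤ j := hfst_le v j hvj
    exact D.interp (fst z) (fst v) j h1 h2 z (hmem_fst z) hzj
  have hu : u ∈ D.bag (fst v) := key u hadju humem
  have hw : w ∈ D.bag (fst v) := key w hadjw hwmem
  have hv : v ∈ D.bag (fst v) := hmem_fst v
  have hsub : ({u, v, w} : Finset V) ⊆ D.bag (fst v) := by
    intro x hx
    simp only [Finset.mem_insert, Finset.mem_singleton] at hx
    rcases hx with rfl | rfl | rfl <;> assumption
  have hcard3 : ({u, v, w} : Finset V).card = 3 :=
    Finset.card_eq_three.mpr ⟨u, v, w, hadju.ne', huw, hadjw.ne, rfl⟩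
  have heq : D.bag (fst v) = ({u, v, w} : Finset V) :=
    (Finset.eq_of_subset_of_card_le hsub (by rw [hcard3]; exact hcard _)).symm
  refine ⟨fst v, ⟨v, hv⟩, fun x hx => ?_⟩
  rw [heq] at hx
  simp only [Finset.mem_insert, Finset.mem_singleton] at hx
  rcases hx with rfl | rfl | rfl
  · exact humem
  · exact hvS
  · exact hwmem

private lemma separator_aux (D : PathDecomp G) {t2 : Fin D.n} {x y : V} (W : G.Walk x y)
    (hW : ∀ z ∈ W.support, z ∉ D.bag t2)
    (hx : ∀ i, x ∈ D.bag i → i < t2) : ∀ i, y ∈ D.bag i → i < t2 := by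
  induction W with
  | nil => exact hx
  | @cons a b c hab W ih =>
    have hbs : b ∈ (Walk.cons hab W).support := by
      simp [Walk.support_cons, W.start_mem_support]
    have hb : ∀ i, b ∈ D.bag i → i < t2 := by
      intro i hi
      by_contra hle
      push_neg at hle
      obtain ⟨j, haj, hbj⟩ := D.edge_bag hab
      have hj : j < t2 := hx j haj
      exact hW b hbs (D.interp j t2 i hj.le hle b hbj hi)
    exact ih (fun z hz => hW z (by simp [Walk.support_cons, hz])) hb

lemma separator (D : PathDecomp G) {t1 t2 t3 : Fin D.n} (h12 : t1 < t2) (h23 : t2 < t3)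
    {a b : V} (ha : a ∈ D.bag t1) (hb : b ∈ D.bag t3) (W : G.Walk a b)
    (hW : ∀ z ∈ W.support, z ∉ D.bag t2) : False := by
  have hLa : ∀ i, a ∈ D.bag i → i < t2 := by
    intro i hi
    by_contra hle
    push_neg at hle
    exact hW a W.start_mem_support (D.interp t1 t2 i h12.le hle a ha hi)
  exact absurd (separator_aux D W hW hLa t3 hb) (by simpa using h23.le)

end Decomp

section Final

variable {V : Type u} {G : SimpleGraph V}

lemma final_contradiction [DecidableEq V] (D : PathDecomp G) {ta tm tb : Fin D.n}
    (h1 : ta < tm) (h2 : tm < tb)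
    {e₀ : Sym2 V} {a₀ b₀ : V} (he : e₀ = s(a₀, b₀))
    {vm wm : V} (hwm_mem : wm = a₀ ∨ wm = b₀) (hvmwm : vm ≠ wm)
    (hKm : ∀ (x : V) (c : G.Walk x x), c.IsCycle → e₀ ∈ c.edges →
      ∀ z ∈ c.support, z ∉ CutComp G vm wm)
    {va : V} (hvma : vm ≠ va)
    {ra : V} {ca : G.Walk ra ra} (hca : ca.IsCycle) (hcae : e₀ ∈ ca.edges)
    (hvaca : va ∈ ca.support)
    {Da : G.Walk va va} (hDa : Da.IsCycle)
    (hDaav : ∀ z ∈ Da.support, z ∉ CutComp G vm wm ∧ z ≠ vm)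
    (hbta : ∀ x ∈ D.bag ta, x ∈ Da.support) (hbtane : (D.bag ta).Nonempty)
    {vb : V} (hvmb : vm ≠ vb)
    {rb : V} {cb : G.Walk rb rb} (hcb : cb.IsCycle) (hcbe : e₀ ∈ cb.edges)
    (hvbcb : vb ∈ cb.support)
    {Db : G.Walk vb vb} (hDb : Db.IsCycle)
    (hDbav : ∀ z ∈ Db.support, z ∉ CutComp G vm wm ∧ z ≠ vm)
    (hbtb : ∀ x ∈ D.bag tb, x ∈ Db.support) (hbtbne : (D.bag tb).Nonempty)
    (hbtm : ∀ x ∈ D.bag tm, x = vm ∨ x ∈ CutComp G vm wm) : False := by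
  obtain ⟨a, ha⟩ := hbtane
  obtain ⟨b, hb⟩ := hbtbne
  have haDa : a ∈ Da.support := hbta a ha
  have hbDb : b ∈ Db.support := hbtb b hb
  -- piece 1 : a → va within Da
  obtain ⟨W1, hW1v, hW1s⟩ :=
    cycle_reach_avoiding hDa haDa hvma (Ne.symm (hDaav a haDa).2)
  -- piece 2 : va → wm within ca
  have hwmca : wm ∈ ca.support := by
    rcases hwm_mem with rfl | rfl
    · exact Walk.fst_mem_support_of_mem_edges ca (he ▸ hcae)
    · exact Walk.snd_mem_support_of_mem_edges ca (he ▸ hcae)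
  have hwmca' : wm ∈ (ca.rotate va hvaca).support :=
    (mem_support_rotate_iff hca hvaca).mpr hwmca
  obtain ⟨W2, hW2v, hW2s⟩ :=
    cycle_reach_avoiding (hca.rotate hvaca) hwmca' hvma hvmwm
  -- piece 3 : wm → vb within cb (reversed)
  have hwmcb : wm ∈ cb.support := by
    rcases hwm_mem with rfl | rfl
    · exact Walk.fst_mem_support_of_mem_edges cb (he ▸ hcbe)
    · exact Walk.snd_mem_support_of_mem_edges cb (he ▸ hcbe)
  have hwmcb' : wm ∈ (cb.rotate vb hvbcb).support :=
    (mem_support_rotate_iff hcb hvbcb).mpr hwmcb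
  obtain ⟨W3, hW3v, hW3s⟩ :=
    cycle_reach_avoiding (hcb.rotate hvbcb) hwmcb' hvmb hvmwm
  -- piece 4 : vb → b within Db
  obtain ⟨W4, hW4v, hW4s⟩ :=
    cycle_reach_avoiding hDb hbDb hvmb (Ne.symm (hDbav b hbDb).2)
  -- assemble
  set W : G.Walk a b := ((W1.reverse.append W2).append W3.reverse).append W4
  have hWgood : ∀ z ∈ W.support, z ∉ D.bag tm := by
    intro z hz hzbag
    have hzK : z = vm ∨ z ∈ CutComp G vm wm := hbtm z hzbag
    have hmem : z ∈ W1.support ∨ z ∈ W2.support ∨ z ∈ W3.support ∨ z ∈ W4.support := by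
      simp only [W, Walk.mem_support_append_iff, Walk.support_reverse,
        List.mem_reverse] at hz
      tauto
    rcases hmem with h | h | h | h
    · have := hDaav z (hW1s z h)
      rcases hzK with rfl | hzK
      · exact this.2 rfl
      · exact this.1 hzK
    · rcases hzK with rfl | hzK
      · exact hW2v h
      · have hzc : z ∈ ca.support := (mem_support_rotate_iff hca hvaca).mp (hW2s z h)
        exact hKm ra ca hca hcae z hzc hzK
    · rcases hzK with rfl | hzK
      · exact hW3v h
      · have hzc : z ∈ cb.support := (mem_support_rotate_iff hcb hvbcb).mp (hW3s z h)
        exact hKm rb cb hcb hcbe z hzc hzK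
    · have := hDbav z (hW4s z h)
      rcases hzK with rfl | hzK
      · exact this.2 rfl
      · exact this.1 hzK
  exact separator D h1 h2 ha hb W hWgood

end Final

section Setup

variable {V : Type u} {G : SimpleGraph V}

lemma path_areach_start [DecidableEq V] {x' v z : V} {q : G.Walk x' v} (hq : q.IsPath)
    (hz : z ∈ q.support) (hzv : z ≠ v) : AReach G v x' z := by
  refine ⟨q.takeUntil z hz, fun hvW => ?_⟩
  have hspec : q.support = (q.takeUntil z hz).support ++ (q.dropUntil z hz).support.tail := by
    rw [← Walk.support_append, Walk.take_spec]
  have hnd := hq.support_nodup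
  rw [hspec] at hnd
  have hvd : v ∈ (q.dropUntil z hz).support.tail := by
    have hve : v ∈ (q.dropUntil z hz).support := (q.dropUntil z hz).end_mem_support
    rw [(q.dropUntil z hz).support_eq_cons] at hve
    rcases List.mem_cons.mp hve with h | h
    · exact absurd h.symm hzv
    · exact h
  exact List.disjoint_of_nodup_append hnd hvW hvd

lemma cutComp_disjoint {v w v' w' : V} (hconn : G.Connected) (hne : v ≠ v')
    (hv'K : v' ∉ CutComp G v w) (hvK' : v ∉ CutComp G v' w') {z : V}
    (hz : z ∈ CutComp G v w) (hz' : z ∈ CutComp G v' w') : False := by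
  obtain ⟨W, hW⟩ := cutComp_exists_walk_to_cut hconn hz
  have hv'W : v' ∉ W.support := by
    intro hmem
    rcases hW v' hmem with h | h
    · exact hv'K h
    · exact hne h.symm
  exact hvK' (mem_cutComp_of_areach hz' ⟨W, hv'W⟩)

lemma setup_cut [DecidableEq V] (hconn : G.Connected) (h2ec : TwoEdgeConnected G)
    {a₀ b₀ : V} (hadj : G.Adj a₀ b₀) {v : V} (hv : IsCutVertex G v) :
    ∃ w : V, (w = a₀ ∨ w = b₀) ∧ v ≠ w ∧
      (∀ (x : V) (c : G.Walk x x), c.IsCycle → s(a₀, b₀) ∈ c.edges →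
        ∀ z ∈ c.support, z ∉ CutComp G v w) ∧
      ∃ Dc : G.Walk v v, Dc.IsCycle ∧ (∀ z ∈ Dc.support, z = v ∨ z ∈ CutComp G v w) := by
  obtain ⟨w, hw⟩ : ∃ w, w = if a₀ = v then b₀ else a₀ := ⟨_, rfl⟩
  have hw_mem : w = a₀ ∨ w = b₀ := by
    rw [hw]; split_ifs <;> simp
  have hvw : v ≠ w := by
    rw [hw]; split_ifs with h
    · rw [← h]; exact hadj.ne
    · exact fun h' => h h'.symm
  have hKav : ∀ (x : V) (c : G.Walk x x), c.IsCycle → s(a₀, b₀) ∈ c.edges →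
      ∀ z ∈ c.support, z ∉ CutComp G v w := by
    intro x c hc hce z hzc hzK
    have hwc : w ∈ c.support := by
      rcases hw_mem with rfl | rfl
      · exact Walk.fst_mem_support_of_mem_edges c hce
      · exact Walk.snd_mem_support_of_mem_edges c hce
    have hwK : w ∉ CutComp G v w := not_mem_cutComp_self (Ne.symm hvw)
    have hzc' : z ∈ (c.rotate w hwc).support := (mem_support_rotate_iff hc hwc).mpr hzc
    obtain ⟨W, hWv, -⟩ := cycle_reach_avoiding (hc.rotate hwc) hzc' hvw
      (Ne.symm (cutComp_ne hzK))
    exact hwK (mem_cutComp_of_areach hzK (AReach.symm ⟨W, hWv⟩))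
  obtain ⟨x, hxK, hxadj⟩ := cutComp_exists_adj hconn hv (Ne.symm hvw)
  obtain ⟨u, d, hd, hde⟩ := exists_cycle_through_edge h2ec hxadj
  have hvd : v ∈ d.support := Walk.fst_mem_support_of_mem_edges d hde
  have hDc : (d.rotate v hvd).IsCycle := hd.rotate hvd
  have hDce : s(v, x) ∈ (d.rotate v hvd).edges := (Walk.rotate_edges d v hvd).mem_iff.mpr hde
  obtain ⟨x', hadj', q, hDc_eq⟩ := Walk.not_nil_iff.mp hDc.not_nil
  rw [hDc_eq] at hDc hDce
  obtain ⟨hqpath, -⟩ := (Walk.cons_isCycle_iff q hadj').mp hDc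
  have hxq : x ∈ q.support := by
    have hxs : x ∈ (Walk.cons hadj' q).support :=
      Walk.snd_mem_support_of_mem_edges _ hDce
    rw [Walk.support_cons] at hxs
    rcases List.mem_cons.mp hxs with h | h
    · exact absurd h hxadj.ne'
    · exact h
  refine ⟨w, hw_mem, hvw, hKav, Walk.cons hadj' q, hDc, ?_⟩
  intro z hz
  by_cases hzv : z = v
  · exact Or.inl hzv
  · right
    have hzq : z ∈ q.support := by
      rw [Walk.support_cons] at hz
      rcases List.mem_cons.mp hz with h | h
      · exact absurd h hzv
      · exact h
    have h1 : AReach G v x' x := path_areach_start hqpath hxq hxadj.ne'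
    have h2 : AReach G v x' z := path_areach_start hqpath hzq hzv
    exact mem_cutComp_of_areach hxK (h1.symm.trans h2)

end Setup

lemma mk_avoid {V : Type u} {G : SimpleGraph V} {va wa vb wb : V} (hconn : G.Connected)
    (hneab : va ≠ vb) (hKab : vb ∉ CutComp G va wa) (hKba : va ∉ CutComp G vb wb)
    {Da : G.Walk va va} (hDKa : ∀ z ∈ Da.support, z = va ∨ z ∈ CutComp G va wa) :
    ∀ z ∈ Da.support, z ∉ CutComp G vb wb ∧ z ≠ vb := by
  intro z hz
  rcases hDKa z hz with rfl | hzK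
  · exact ⟨hKba, hneab⟩
  · constructor
    · intro hzK2
      exact cutComp_disjoint hconn hneab hKab hKba hzK hzK2
    · rintro rfl
      exact hKab hzK

/-- If `G` is a 2-edge-connected finite simple graph with path-width at most 2,
then every block of `G` contains at most two cut vertices of `G`. -/
theorem block_at_most_two_cutVertices {V : Type u} [Fintype V] (G : SimpleGraph V)
    (h2ec : TwoEdgeConnected G) (hpw : pathWidth G ≤ 2) (B : G.Subgraph)
    (hB : IsBlock G B) :
    {v | v ∈ B.verts ∧ IsCutVertex G v}.ncard ≤ 2 := by
  classical
  by_contra hcon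
  push_neg at hcon
  obtain ⟨T, hTsub, hT3⟩ := Set.exists_subset_card_eq hcon
  obtain ⟨v₁, v₂, v₃, hne12, hne13, hne23, rfl⟩ := Set.ncard_eq_three.mp hT3
  have hm1 : v₁ ∈ B.verts ∧ IsCutVertex G v₁ := hTsub (by simp)
  have hm2 : v₂ ∈ B.verts ∧ IsCutVertex G v₂ := hTsub (by simp)
  have hm3 : v₃ ∈ B.verts ∧ IsCutVertex G v₃ := hTsub (by simp)
  obtain ⟨e₀, he₀, hBeq⟩ := hB
  obtain ⟨a₀, b₀, rfl⟩ : ∃ a b, e₀ = s(a, b) := by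
    induction e₀ using Sym2.ind with
    | _ x y => exact ⟨x, y, rfl⟩
  have hadj : G.Adj a₀ b₀ := he₀
  have hconn := h2ec.1
  have getCyc : ∀ v, v ∈ B.verts → ∃ (x : V) (c : G.Walk x x),
      c.IsCycle ∧ s(a₀, b₀) ∈ c.edges ∧ v ∈ c.support := by
    intro v hvB
    rw [hBeq] at hvB
    obtain ⟨b', hb'adj, hocc⟩ := (show ∃ b, G.Adj v b ∧ s(v, b) ∈ {f | OnCommonCycle G s(a₀, b₀) f} from hvB)
    rcases hocc with heq | ⟨x, c, hc, hce, hcf⟩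
    · obtain ⟨x, c, hc, hce⟩ := exists_cycle_through_edge h2ec hadj
      refine ⟨x, c, hc, hce, ?_⟩
      have hvmem : v ∈ s(a₀, b₀) := by rw [heq]; exact Sym2.mem_mk_left v b'
      rcases Sym2.mem_iff.mp hvmem with rfl | rfl
      · exact Walk.fst_mem_support_of_mem_edges c hce
      · exact Walk.snd_mem_support_of_mem_edges c hce
    · exact ⟨x, c, hc, hce, Walk.fst_mem_support_of_mem_edges c hcf⟩
  obtain ⟨r₁, c₁, hc₁, hce₁, hvc₁⟩ := getCyc v₁ hm1.1
  obtain ⟨r₂, c₂, hc₂, hce₂, hvc₂⟩ := getCyc v₂ hm2.1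
  obtain ⟨r₃, c₃, hc₃, hce₃, hvc₃⟩ := getCyc v₃ hm3.1
  obtain ⟨w₁, hwm₁, hvw₁, hKav₁, D₁, hD₁, hDK₁⟩ := setup_cut hconn h2ec hadj hm1.2
  obtain ⟨w₂, hwm₂, hvw₂, hKav₂, D₂, hD₂, hDK₂⟩ := setup_cut hconn h2ec hadj hm2.2
  obtain ⟨w₃, hwm₃, hvw₃, hKav₃, D₃, hD₃, hDK₃⟩ := setup_cut hconn h2ec hadj hm3.2
  have hK12 : v₂ ∉ CutComp G v₁ w₁ := hKav₁ r₂ c₂ hc₂ hce₂ v₂ hvc₂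
  have hK13 : v₃ ∉ CutComp G v₁ w₁ := hKav₁ r₃ c₃ hc₃ hce₃ v₃ hvc₃
  have hK21 : v₁ ∉ CutComp G v₂ w₂ := hKav₂ r₁ c₁ hc₁ hce₁ v₁ hvc₁
  have hK23 : v₃ ∉ CutComp G v₂ w₂ := hKav₂ r₃ c₃ hc₃ hce₃ v₃ hvc₃
  have hK31 : v₁ ∉ CutComp G v₃ w₃ := hKav₃ r₁ c₁ hc₁ hce₁ v₁ hvc₁
  have hK32 : v₂ ∉ CutComp G v₃ w₃ := hKav₃ r₂ c₂ hc₂ hce₂ v₂ hvc₂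
  have hav12 := mk_avoid hconn hne12 hK12 hK21 hDK₁
  have hav13 := mk_avoid hconn hne13 hK13 hK31 hDK₁
  have hav21 := mk_avoid hconn hne12.symm hK21 hK12 hDK₂
  have hav23 := mk_avoid hconn hne23 hK23 hK32 hDK₂
  have hav31 := mk_avoid hconn hne13.symm hK31 hK13 hDK₃
  have hav32 := mk_avoid hconn hne23.symm hK32 hK23 hDK₃
  obtain ⟨PD, hPDcard⟩ := exists_small_decomp hpw
  obtain ⟨t₁, htne₁, htsub₁⟩ := exists_bag_in_cycle PD hPDcard hD₁
  obtain ⟨t₂, htne₂, htsub₂⟩ := exists_bag_in_cycle PD hPDcard hD₂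
  obtain ⟨t₃, htne₃, htsub₃⟩ := exists_bag_in_cycle PD hPDcard hD₃
  have hbm₁ : ∀ x ∈ PD.bag t₁, x = v₁ ∨ x ∈ CutComp G v₁ w₁ :=
    fun x hx => hDK₁ x (htsub₁ x hx)
  have hbm₂ : ∀ x ∈ PD.bag t₂, x = v₂ ∨ x ∈ CutComp G v₂ w₂ :=
    fun x hx => hDK₂ x (htsub₂ x hx)
  have hbm₃ : ∀ x ∈ PD.bag t₃, x = v₃ ∨ x ∈ CutComp G v₃ w₃ :=
    fun x hx => hDK₃ x (htsub₃ x hx)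
  have hts12 : t₁ ≠ t₂ := by
    rintro rfl
    obtain ⟨z, hz⟩ := htne₁
    obtain ⟨h1, h2⟩ := hav12 z (htsub₁ z hz)
    rcases hDK₂ z (htsub₂ z hz) with rfl | h
    · exact h2 rfl
    · exact h1 h
  have hts13 : t₁ ≠ t₃ := by
    rintro rfl
    obtain ⟨z, hz⟩ := htne₁
    obtain ⟨h1, h2⟩ := hav13 z (htsub₁ z hz)
    rcases hDK₃ z (htsub₃ z hz) with rfl | h
    · exact h2 rfl
    · exact h1 h
  have hts23 : t₂ ≠ t₃ := by
    rintro rfl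
    obtain ⟨z, hz⟩ := htne₂
    obtain ⟨h1, h2⟩ := hav23 z (htsub₂ z hz)
    rcases hDK₃ z (htsub₃ z hz) with rfl | h
    · exact h2 rfl
    · exact h1 h
  rcases lt_trichotomy t₁ t₂ with hA | hA | hA
  · rcases lt_trichotomy t₂ t₃ with hB | hB | hB
    · -- t₁ < t₂ < t₃ : middle v₂
      exact final_contradiction PD hA hB rfl hwm₂ hvw₂ hKav₂ hne12.symm hc₁ hce₁ hvc₁
        hD₁ hav12 htsub₁ htne₁ hne23 hc₃ hce₃ hvc₃ hD₃ hav32 htsub₃ htne₃ hbm₂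
    · exact hts23 hB
    · rcases lt_trichotomy t₁ t₃ with hC | hC | hC
      · -- t₁ < t₃ < t₂ : middle v₃
        exact final_contradiction PD hC hB rfl hwm₃ hvw₃ hKav₃ hne13.symm hc₁ hce₁ hvc₁
          hD₁ hav13 htsub₁ htne₁ hne23.symm hc₂ hce₂ hvc₂ hD₂ hav23 htsub₂ htne₂ hbm₃
      · exact hts13 hC
      · -- t₃ < t₁ < t₂ : middle v₁
        exact final_contradiction PD hC hA rfl hwm₁ hvw₁ hKav₁ hne13 hc₃ hce₃ hvc₃
          hD₃ hav31 htsub₃ htne₃ hne12 hc₂ hce₂ hvc₂ hD₂ hav21 htsub₂ htne₂ hbm₁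
  · exact hts12 hA
  · rcases lt_trichotomy t₁ t₃ with hB | hB | hB
    · -- t₂ < t₁ < t₃ : middle v₁
      exact final_contradiction PD hA hB rfl hwm₁ hvw₁ hKav₁ hne12 hc₂ hce₂ hvc₂
        hD₂ hav21 htsub₂ htne₂ hne13 hc₃ hce₃ hvc₃ hD₃ hav31 htsub₃ htne₃ hbm₁
    · exact hts13 hB
    · rcases lt_trichotomy t₂ t₃ with hC | hC | hC
      · -- t₂ < t₃ < t₁ : middle v₃
        exact final_contradiction PD hC hB rfl hwm₃ hvw₃ hKav₃ hne23.symm hc₂ hce₂ hvc₂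
          hD₂ hav23 htsub₂ htne₂ hne13.symm hc₁ hce₁ hvc₁ hD₁ hav13 htsub₁ htne₁ hbm₃
      · exact hts23 hC
      · -- t₃ < t₂ < t₁ : middle v₂
        exact final_contradiction PD hC hA rfl hwm₂ hvw₂ hKav₂ hne23 hc₃ hce₃ hvc₃
          hD₃ hav32 htsub₃ htne₃ hne12.symm hc₁ hce₁ hvc₁ hD₁ hav12 htsub₁ htne₁ hbm₂
end
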